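/- arXiv:2008.01694 — 5 statements merged into one kernel-verified Lean document; each statement's English description precedes it below -/
import Mathlib

section
/- For any real parameters a,b > 0 and ω > 0, the double integral of e^{-(a/2)λ² - (b/2)s²}/(s-λ)² with s ranging over ℝ and λ ranging over the horizontal line ℝ + iω equals -2π√(ab)/(a+b). -/
open MeasureTheory

open Set Filter Complex Asymptotics

noncomputable section

namespace Stmt0Aux

lemma intOn_mul_exp (r : ℝ) (hr : 0 < r) :
    IntegrableOn (fun t : ℝ => t * Real.exp (-(r * t))) (Ioi 0) := by
  apply integrable_of_isBigO_exp_neg (half_pos hr)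
  · fun_prop
  · have h2 : Tendsto (fun t : ℝ => t * Real.exp (-(r/2) * t)) atTop (nhds 0) := by
      refine (tendsto_rpow_mul_exp_neg_mul_atTop_nhds_zero 1 (r/2) (half_pos hr)).congr' ?_
      filter_upwards [eventually_gt_atTop (0:ℝ)] with t ht
      rw [Real.rpow_one]
    have hO := (h2.isBigO_one ℝ).mul
      (isBigO_refl (fun t : ℝ => Real.exp (-(r/2) * t)) atTop)
    simp only [one_mul] at hO
    refine (hO.congr_left fun t => ?_)
    rw [mul_assoc, ← Real.exp_add]
    congr 2
    ring

lemma intOn_cexp (c : ℂ) (hc : 0 < c.re) :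
    IntegrableOn (fun t : ℝ => (t : ℂ) * Complex.exp (-(c * t))) (Ioi 0) := by
  have hg : Integrable (fun t : ℝ => t * Real.exp (-(c.re * t)))
      (volume.restrict (Ioi 0)) := intOn_mul_exp c.re hc
  refine hg.mono' ?_ ?_
  · exact (Continuous.aestronglyMeasurable (by fun_prop)).restrict
  · filter_upwards [ae_restrict_mem measurableSet_Ioi] with t ht
    simp only [norm_mul, Complex.norm_exp, Complex.norm_real, Real.norm_eq_abs]
    have : (-(c * (t:ℝ))).re = -(c.re * t) := by simp [Complex.mul_re]
    rw [this, abs_of_pos ht]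

lemma integral_texp (c : ℂ) (hc : 0 < c.re) :
    ∫ t in Ioi (0:ℝ), (t : ℂ) * Complex.exp (-(c * t)) = 1 / c ^ 2 := by
  have hc0 : c ≠ 0 := fun h => by simp [h] at hc
  have key := integral_Ioi_of_hasDerivAt_of_tendsto
    (f := fun t : ℝ => -(((t : ℂ)/c + 1/c^2) * Complex.exp (-(c * t))))
    (f' := fun t : ℝ => (t : ℂ) * Complex.exp (-(c * t))) (a := 0) (m := 0)
    ?_ ?_ ?_ ?_
  · rw [key]
    simp
  · exact Continuous.continuousWithinAt (by fun_prop)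
  · intro t ht
    have hu : HasDerivAt (fun t : ℝ => (t : ℂ)/c + 1/c^2) (1/c) t := by
      have h := ((Complex.ofRealCLM.hasDerivAt (x := t)).div_const c).add_const (1/c^2)
      exact h.congr_deriv (by simp)
    have hv : HasDerivAt (fun t : ℝ => Complex.exp (-(c * t)))
        (-c * Complex.exp (-(c * t))) t := by
      have h1 : HasDerivAt (fun t : ℝ => -(c * (t:ℝ) : ℂ)) (-c) t := by
        exact ((Complex.ofRealCLM.hasDerivAt (x := t)).const_mul c).neg.congr_deriv (by simp)
      have := h1.cexp
      convert this using 1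
      ring
    have := (hu.mul hv).neg
    refine this.congr_deriv ?_
    field_simp
    ring
  · exact intOn_cexp c hc
  · have hb : Tendsto (fun t : ℝ => (t/‖c‖ + ‖(1:ℂ)/c^2‖) * Real.exp (-c.re * t))
        atTop (nhds 0) := by
      have h2 : Tendsto (fun t : ℝ => t * Real.exp (-c.re * t)) atTop (nhds 0) := by
        refine (tendsto_rpow_mul_exp_neg_mul_atTop_nhds_zero 1 c.re hc).congr' ?_
        filter_upwards [eventually_gt_atTop (0:ℝ)] with t ht
        rw [Real.rpow_one]
      have h4 : Tendsto (fun t : ℝ => Real.exp (-c.re * t)) atTop (nhds 0) := by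
        refine Real.tendsto_exp_atBot.comp ?_
        exact tendsto_id.const_mul_atTop_of_neg (by linarith)
      have h5 := (h2.div_const ‖c‖).add (h4.const_mul ‖(1:ℂ)/c^2‖)
      simp only [zero_div, mul_zero, add_zero] at h5
      exact h5.congr (fun t => by ring)
    refine squeeze_zero_norm' ?_ hb
    filter_upwards [eventually_gt_atTop (0:ℝ)] with t ht
    have hre : (-(c * (t:ℝ))).re = -c.re * t := by simp [Complex.mul_re]
    calc ‖-(((t : ℂ)/c + 1/c^2) * Complex.exp (-(c * t)))‖
        = ‖(t : ℂ)/c + 1/c^2‖ * Real.exp (-c.re * t) := by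
          rw [norm_neg, norm_mul, Complex.norm_exp, hre]
      _ ≤ (t/‖c‖ + ‖(1:ℂ)/c^2‖) * Real.exp (-c.re * t) := by
          gcongr
          refine (norm_add_le _ _).trans ?_
          have : ‖(t : ℂ)/c‖ = t/‖c‖ := by
            rw [norm_div, Complex.norm_real, Real.norm_eq_abs, abs_of_pos ht]
          rw [this]



lemma cpow_half (x : ℝ) (hx : 0 ≤ x) : ((x:ℝ):ℂ) ^ (1/2 : ℂ) = ((Real.sqrt x : ℝ) : ℂ) := by
  rw [Real.sqrt_eq_rpow, Complex.ofReal_cpow hx]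
  norm_num

lemma one_div_sq (z : ℂ) (hz : z.im < 0) :
    (1 : ℂ) / z ^ 2 = -∫ t in Ioi (0:ℝ), (t : ℂ) * Complex.exp (-(Complex.I * z * t)) := by
  have hc : 0 < (Complex.I * z).re := by
    simp [Complex.mul_re]
    linarith
  rw [integral_texp _ hc]
  rw [mul_pow, Complex.I_sq]
  have hz0 : z ≠ 0 := fun h => by simp [h] at hz
  field_simp

lemma gauss_s (b : ℝ) (hb : 0 < b) (t : ℝ) :
    ∫ s : ℝ, Complex.exp (-((b:ℂ)/2) * s^2 - Complex.I * t * s)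
      = (Real.sqrt (2*Real.pi/b) : ℂ) * Complex.exp (-(t^2 : ℂ) / (2*b)) := by
  have h : ∀ s : ℝ, -((b:ℂ)/2) * s^2 - Complex.I * t * s
      = (-((b:ℂ)/2)) * s^2 + (-(Complex.I * t)) * s + 0 := by intro s; ring
  simp_rw [h]
  rw [integral_cexp_quadratic (by simp; positivity) _ _]
  congr 1
  · have hb0 : (b:ℂ) ≠ 0 := by exact_mod_cast hb.ne'
    rw [show (Real.pi : ℂ) / -(-((b:ℂ)/2)) = ((2*Real.pi/b : ℝ) : ℂ) by
      push_cast; field_simp]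
    exact cpow_half _ (by positivity)
  · congr 1
    have hb0 : (b:ℂ) ≠ 0 := by exact_mod_cast hb.ne'
    field_simp
    ring_nf
    simp [Complex.I_sq]
    try ring

lemma gauss_x (a ω t : ℝ) (ha : 0 < a) :
    ∫ x : ℝ, Complex.exp (-((a:ℂ)/2) * ((x:ℂ) + ω*Complex.I)^2
        + Complex.I * t * ((x:ℂ) + ω*Complex.I))
      = (Real.sqrt (2*Real.pi/a) : ℂ) * Complex.exp (-(t^2 : ℂ) / (2*a)) := by
  have h : ∀ x : ℝ, -((a:ℂ)/2) * ((x:ℂ) + ω*Complex.I)^2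
        + Complex.I * t * ((x:ℂ) + ω*Complex.I)
      = (-((a:ℂ)/2)) * x^2 + (Complex.I * (t - a*ω)) * x
        + ((a:ℂ)/2 * ω^2 - t*ω) := by
    intro x
    have : (Complex.I)^2 = -1 := Complex.I_sq
    ring_nf
    rw [Complex.I_sq]
    ring
  simp_rw [h]
  rw [integral_cexp_quadratic (by simp; positivity) _ _]
  congr 1
  · have ha0 : (a:ℂ) ≠ 0 := by exact_mod_cast ha.ne'
    rw [show (Real.pi : ℂ) / -(-((a:ℂ)/2)) = ((2*Real.pi/a : ℝ) : ℂ) by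
      push_cast; field_simp]
    exact cpow_half _ (by positivity)
  · congr 1
    have ha0 : (a:ℂ) ≠ 0 := by exact_mod_cast ha.ne'
    field_simp
    ring_nf
    simp [Complex.I_sq]
    try ring

lemma int_t_sq (k : ℝ) (hk : 0 < k) :
    ∫ t in Ioi (0:ℝ), t * Real.exp (-k * t^2) = 1/(2*k) := by
  have key := integral_Ioi_of_hasDerivAt_of_tendsto
    (f := fun t : ℝ => -Real.exp (-k * t^2)/(2*k))
    (f' := fun t : ℝ => t * Real.exp (-k * t^2)) (a := 0) (m := 0)
    ?_ ?_ ?_ ?_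
  · rw [key]
    norm_num
    ring
  · exact Continuous.continuousWithinAt (by fun_prop)
  · intro t ht
    have h1 : HasDerivAt (fun t : ℝ => -k * t^2) (-k * (2*t)) t := by
      simpa using ((hasDerivAt_pow 2 t).const_mul (-k))
    have := (h1.exp.neg).div_const (2*k)
    refine this.congr_deriv ?_
    field_simp
  · exact (integrable_mul_exp_neg_mul_sq hk).integrableOn
  · have : Tendsto (fun t : ℝ => Real.exp (-k * t^2)) atTop (nhds 0) := by
      refine Real.tendsto_exp_atBot.comp ?_
      have : Tendsto (fun t : ℝ => t^2) atTop atTop := by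
        simpa using tendsto_pow_atTop (n := 2) (by norm_num)
      exact this.const_mul_atTop_of_neg (by linarith)
    simpa using (this.neg).div_const (2*k)



lemma norm_cexp (w : ℂ) : ‖Complex.exp w‖ = Real.exp w.re := by
  simp [Complex.norm_exp]

lemma inner_eq (b ω : ℝ) (hb : 0 < b) (hω : 0 < ω) (x : ℝ) :
    ∫ s : ℝ, Complex.exp (-((b:ℂ)/2) * s^2) / ((s:ℂ) - ((x:ℂ) + ω*Complex.I))^2
      = -∫ t in Ioi (0:ℝ), (t:ℂ) * Complex.exp (Complex.I * t * ((x:ℂ) + ω*Complex.I))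
          * ((Real.sqrt (2*Real.pi/b) : ℂ) * Complex.exp (-(t^2:ℂ)/(2*b))) := by
  set l : ℂ := (x:ℂ) + ω*Complex.I with hl
  have him : ∀ s : ℝ, ((s:ℂ) - l).im = -ω := by intro s; simp [hl]
  have h1 : ∀ s : ℝ, Complex.exp (-((b:ℂ)/2) * s^2) / ((s:ℂ) - l)^2
      = -∫ t in Ioi (0:ℝ), Complex.exp (-((b:ℂ)/2) * s^2)
          * ((t:ℂ) * Complex.exp (-(Complex.I * ((s:ℂ) - l) * t))) := by
    intro s
    rw [div_eq_mul_one_div, one_div_sq _ (by rw [him]; linarith), mul_neg,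
      ← integral_const_mul]
  simp_rw [h1]
  rw [integral_neg]
  congr 1
  have hint : Integrable (Function.uncurry fun (s t : ℝ) =>
      Complex.exp (-((b:ℂ)/2) * s^2)
        * ((t:ℂ) * Complex.exp (-(Complex.I * ((s:ℂ) - l) * t))))
      (volume.prod (volume.restrict (Ioi 0))) := by
    have hg : Integrable (Function.uncurry fun (s t : ℝ) =>
        Real.exp (-(b/2) * s^2) * (|t| * Real.exp (-(ω * t))))
        (volume.prod (volume.restrict (Ioi 0))) := by
      have hA : Integrable (fun s : ℝ => Real.exp (-(b/2) * s^2)) volume :=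
        integrable_exp_neg_mul_sq (by positivity)
      have hB : Integrable (fun t : ℝ => |t| * Real.exp (-(ω * t)))
          (volume.restrict (Ioi 0)) := by
        refine (intOn_mul_exp ω hω).congr ?_
        filter_upwards [ae_restrict_mem measurableSet_Ioi] with t ht
        rw [abs_of_pos ht]
      exact hA.mul_prod hB
    refine hg.mono' ?_ ?_
    · apply Continuous.aestronglyMeasurable
      fun_prop
    · refine Filter.Eventually.of_forall ?_
      rintro ⟨s, t⟩
      simp only [Function.uncurry]
      have e1 : (-((b:ℂ)/2) * (s:ℂ)^2) = ((-(b/2)*s^2 : ℝ) : ℂ) := by push_cast; ring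
      have e2 : (-(Complex.I * ((s:ℂ) - l) * (t:ℂ))).re = -(ω*t) := by
        simp [hl, Complex.mul_re, Complex.mul_im]
      rw [norm_mul, norm_mul, norm_cexp, norm_cexp, e1, e2, Complex.ofReal_re,
        Complex.norm_real, Real.norm_eq_abs]
  rw [integral_integral_swap hint]
  refine setIntegral_congr_fun measurableSet_Ioi (fun t ht => ?_)
  have h2 : ∀ s : ℝ, Complex.exp (-((b:ℂ)/2) * s^2)
        * ((t:ℂ) * Complex.exp (-(Complex.I * ((s:ℂ) - l) * t)))
      = ((t:ℂ) * Complex.exp (Complex.I * t * l))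
        * Complex.exp (-((b:ℂ)/2) * s^2 - Complex.I * t * s) := by
    intro s
    trans ((t:ℂ) * Complex.exp (-((b:ℂ)/2)*(s:ℂ)^2 + -(Complex.I*((s:ℂ)-l)*(t:ℂ))))
    · rw [Complex.exp_add]; ring
    · rw [show -((b:ℂ)/2)*(s:ℂ)^2 + -(Complex.I*((s:ℂ)-l)*(t:ℂ))
          = (Complex.I*(t:ℂ)*l) + (-((b:ℂ)/2)*(s:ℂ)^2 - Complex.I*(t:ℂ)*(s:ℂ)) from by
            ring, Complex.exp_add]
      ring
  simp_rw [h2]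
  rw [integral_const_mul, gauss_s b hb t]
  try ring



lemma norm_cexp' (w : ℂ) : ‖Complex.exp w‖ = Real.exp w.re := by
  simp [Complex.norm_exp]


end Stmt0Aux

open Stmt0Aux

/-- For `a, b > 0` and `ω > 0`, the double integral of
`e^{-(a/2)λ² - (b/2)s²}/(s-λ)²` with `s` over `ℝ` and `λ = x + iω` over the
horizontal line `ℝ + iω` equals `-2π√(ab)/(a+b)`. -/
theorem stmt0 (a b ω : ℝ) (ha : 0 < a) (hb : 0 < b) (hω : 0 < ω) :
    (∫ x : ℝ, ∫ s : ℝ,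
        Complex.exp (-((a : ℂ)/2) * ((x : ℂ) + (ω : ℂ) * Complex.I)^2
            - ((b : ℂ)/2) * (s : ℂ)^2) /
          ((s : ℂ) - ((x : ℂ) + (ω : ℂ) * Complex.I))^2)
      = ((-(2 * Real.pi * Real.sqrt (a * b) / (a + b)) : ℝ) : ℂ) := by
  have ha0 : (a:ℂ) ≠ 0 := by exact_mod_cast ha.ne'
  have hb0 : (b:ℂ) ≠ 0 := by exact_mod_cast hb.ne'
  set Cb : ℂ := (Real.sqrt (2*Real.pi/b) : ℂ) with hCb
  set Ca : ℂ := (Real.sqrt (2*Real.pi/a) : ℂ) with hCa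
  -- Step 1: rewrite inner integral via inner_eq
  have hA : ∀ x : ℝ, (∫ s : ℝ,
      Complex.exp (-((a : ℂ)/2) * ((x : ℂ) + (ω : ℂ) * Complex.I)^2
          - ((b : ℂ)/2) * (s : ℂ)^2) /
        ((s : ℂ) - ((x : ℂ) + (ω : ℂ) * Complex.I))^2)
      = -∫ t in Ioi (0:ℝ),
          Complex.exp (-((a:ℂ)/2) * ((x:ℂ) + ω*Complex.I)^2)
            * ((t:ℂ) * Complex.exp (Complex.I * t * ((x:ℂ) + ω*Complex.I))
                * (Cb * Complex.exp (-(t^2:ℂ)/(2*b)))) := by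
    intro x
    have hpt : ∀ s : ℝ,
        Complex.exp (-((a : ℂ)/2) * ((x : ℂ) + (ω : ℂ) * Complex.I)^2
            - ((b : ℂ)/2) * (s : ℂ)^2) /
          ((s : ℂ) - ((x : ℂ) + (ω : ℂ) * Complex.I))^2
        = Complex.exp (-((a:ℂ)/2) * ((x:ℂ) + ω*Complex.I)^2)
            * (Complex.exp (-((b:ℂ)/2) * s^2) / ((s:ℂ) - ((x:ℂ) + ω*Complex.I))^2) := by
      intro s
      rw [show -((a : ℂ)/2) * ((x : ℂ) + (ω : ℂ) * Complex.I)^2 - ((b : ℂ)/2) * (s : ℂ)^2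
          = (-((a:ℂ)/2) * ((x:ℂ) + ω*Complex.I)^2) + (-((b:ℂ)/2) * (s:ℂ)^2) from by ring,
        Complex.exp_add, mul_div_assoc]
    simp_rw [hpt]
    rw [integral_const_mul, inner_eq b ω hb hω x, mul_neg, ← integral_const_mul]
  simp_rw [hA]
  rw [integral_neg]
  -- Step 2: Fubini
  have hint2 : Integrable (Function.uncurry fun (x t : ℝ) =>
      Complex.exp (-((a:ℂ)/2) * ((x:ℂ) + ω*Complex.I)^2)
        * ((t:ℂ) * Complex.exp (Complex.I * t * ((x:ℂ) + ω*Complex.I))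
            * (Cb * Complex.exp (-(t^2:ℂ)/(2*b)))))
      (volume.prod (volume.restrict (Ioi 0))) := by
    have hA' : Integrable (fun x : ℝ =>
        Real.exp (a/2*ω^2) * Real.exp (-(a/2) * x^2)) volume :=
      (integrable_exp_neg_mul_sq (show (0:ℝ) < a/2 by positivity)).const_mul _
    have hB' : Integrable (fun t : ℝ =>
        Real.sqrt (2*Real.pi/b) * (|t| * Real.exp (-(ω * t))))
        (volume.restrict (Ioi 0)) := by
      refine Integrable.const_mul ?_ _
      refine (intOn_mul_exp ω hω).congr ?_
      filter_upwards [ae_restrict_mem measurableSet_Ioi] with t ht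
      rw [abs_of_pos ht]
    have hg := hA'.mul_prod hB'
    refine hg.mono' ?_ ?_
    · apply Continuous.aestronglyMeasurable
      fun_prop
    · refine Filter.Eventually.of_forall ?_
      rintro ⟨x, t⟩
      simp only [Function.uncurry]
      have r1 : (-((a:ℂ)/2) * ((x:ℂ) + ω*Complex.I)^2).re
          = a/2*ω^2 + -(a/2)*x^2 := by
        have : -((a:ℂ)/2) * ((x:ℂ) + ω*Complex.I)^2
            = ((a/2*ω^2 + -(a/2)*x^2 : ℝ):ℂ) + ((-(a*x*ω) : ℝ):ℂ) * Complex.I := by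
          rw [show ((x:ℂ) + ω*Complex.I)^2
              = (x:ℂ)^2 + 2*(x:ℂ)*(ω:ℂ)*Complex.I + (ω:ℂ)^2*Complex.I^2 from by ring,
            Complex.I_sq]
          push_cast; ring
        rw [this]
        simp [← Complex.ofReal_pow]
      have r2 : (Complex.I * (t:ℂ) * ((x:ℂ) + ω*Complex.I)).re = -(ω*t) := by
        have : Complex.I * (t:ℂ) * ((x:ℂ) + ω*Complex.I)
            = ((-(ω*t) : ℝ):ℂ) + ((t*x : ℝ):ℂ) * Complex.I := by
          rw [show Complex.I * (t:ℂ) * ((x:ℂ) + ω*Complex.I)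
              = (t:ℂ)*(x:ℂ)*Complex.I + (t:ℂ)*(ω:ℂ)*Complex.I^2 from by ring,
            Complex.I_sq]
          push_cast; ring
        rw [this]
        simp
      have r3 : (-(t^2:ℂ)/(2*b)) = ((-(t^2/(2*b)) : ℝ) : ℂ) := by push_cast; ring
      rw [r3]
      simp only [norm_mul, Complex.norm_exp, r1, r2,
        Complex.ofReal_re, hCb, Complex.norm_real, Real.norm_eq_abs]
      rw [_root_.abs_of_nonneg (Real.sqrt_nonneg (2*Real.pi/b)), Real.exp_add]
      have hle : Real.exp (-(t^2/(2*b))) ≤ 1 := by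
        rw [Real.exp_le_one_iff]
        have : (0:ℝ) ≤ t^2/(2*b) := by positivity
        linarith
      calc Real.exp (a/2*ω^2) * Real.exp (-(a/2)*x^2)
            * (|t| * Real.exp (-(ω*t)) * (Real.sqrt (2*Real.pi/b) * Real.exp (-(t^2/(2*b)))))
          ≤ Real.exp (a/2*ω^2) * Real.exp (-(a/2)*x^2)
            * (|t| * Real.exp (-(ω*t)) * (Real.sqrt (2*Real.pi/b) * 1)) := by
            gcongr
        _ = Real.exp (a/2*ω^2) * Real.exp (-(a/2)*x^2)
            * (Real.sqrt (2*Real.pi/b) * (|t| * Real.exp (-(ω*t)))) := by ring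
  rw [integral_integral_swap hint2]
  -- Step 3: evaluate the x-integral
  set k : ℝ := 1/(2*a) + 1/(2*b) with hk
  have hkpos : 0 < k := by positivity
  have hx : ∀ t ∈ Ioi (0:ℝ), (∫ x : ℝ,
      Complex.exp (-((a:ℂ)/2) * ((x:ℂ) + ω*Complex.I)^2)
        * ((t:ℂ) * Complex.exp (Complex.I * t * ((x:ℂ) + ω*Complex.I))
            * (Cb * Complex.exp (-(t^2:ℂ)/(2*b)))))
      = (Ca * Cb) * ((t * Real.exp (-k * t^2) : ℝ) : ℂ) := by
    intro t ht
    have h2 : ∀ x : ℝ,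
        Complex.exp (-((a:ℂ)/2) * ((x:ℂ) + ω*Complex.I)^2)
          * ((t:ℂ) * Complex.exp (Complex.I * t * ((x:ℂ) + ω*Complex.I))
              * (Cb * Complex.exp (-(t^2:ℂ)/(2*b))))
        = ((t:ℂ) * (Cb * Complex.exp (-(t^2:ℂ)/(2*b))))
            * Complex.exp (-((a:ℂ)/2) * ((x:ℂ) + ω*Complex.I)^2
                + Complex.I * t * ((x:ℂ) + ω*Complex.I)) := by
      intro x
      rw [Complex.exp_add]
      ring
    simp_rw [h2]
    rw [integral_const_mul, gauss_x a ω t ha]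
    have e : -(t^2:ℂ)/(2*b) + -(t^2:ℂ)/(2*a) = ((-k*t^2 : ℝ):ℂ) := by
      rw [hk]; push_cast; field_simp; ring
    calc ((t:ℂ) * (Cb * Complex.exp (-(t^2:ℂ)/(2*b))))
          * (Ca * Complex.exp (-(t^2:ℂ)/(2*a)))
        = (t:ℂ) * Ca * Cb * Complex.exp (-(t^2:ℂ)/(2*b) + -(t^2:ℂ)/(2*a)) := by
          rw [Complex.exp_add]; ring
      _ = (t:ℂ) * Ca * Cb * ((Real.exp (-k*t^2) : ℝ):ℂ) := by
          rw [e, Complex.ofReal_exp]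
      _ = (Ca * Cb) * ((t * Real.exp (-k * t^2) : ℝ) : ℂ) := by
          push_cast; ring
  rw [setIntegral_congr_fun measurableSet_Ioi hx, integral_const_mul]
  have hio : ∫ t in Ioi (0:ℝ), ((t * Real.exp (-k*t^2) : ℝ) : ℂ)
      = ((∫ t in Ioi (0:ℝ), t * Real.exp (-k*t^2) : ℝ) : ℂ) := integral_ofReal
  rw [hio, int_t_sq k hkpos]
  have hab : (0:ℝ) < a*b := by positivity
  have hs2 : Real.sqrt (a*b) ^ 2 = a*b := Real.sq_sqrt hab.le
  have hspos : 0 < Real.sqrt (a*b) := Real.sqrt_pos.mpr hab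
  have hreal : Real.sqrt (2*Real.pi/a) * Real.sqrt (2*Real.pi/b) * (1/(2*k))
      = 2*Real.pi*Real.sqrt (a*b)/(a+b) := by
    have h8 : 1/(2*k) = Real.sqrt (a*b)^2/(a+b) := by
      rw [hs2, hk]; field_simp; ring
    have h7 : 2*Real.pi/a * (2*Real.pi/b) = (2*Real.pi/Real.sqrt (a*b))^2 := by
      rw [div_pow, hs2]
      field_simp
    rw [← Real.sqrt_mul (by positivity), h7,
      Real.sqrt_sq (by positivity), h8]
    field_simp
  rw [show -((Ca*Cb) * ((1/(2*k):ℝ):ℂ))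
      = ((-(Real.sqrt (2*Real.pi/a) * Real.sqrt (2*Real.pi/b) * (1/(2*k))) : ℝ):ℂ) from by
        rw [hCa, hCb]; push_cast; ring]
  rw [hreal]

end
end

section
/- For every n ≥ 2 and every t ≥ 0, the integral operator T_n on L²(t,∞) with kernel T_n(x,y) = (1/√(2π)) e^{-(x²+y²)/2} 𝔢_{n-2}(xy), where 𝔢_m(z) = Σ_{k=0}^m z^k/k! is the exponential partial sum, is self-adjoint, nonnegative, and has operator norm at most 1. -/
open MeasureTheory Real Set
open scoped ENNReal

noncomputable def phiA (k : ℕ) : ℝ → ℝ := fun x => x ^ k * Real.exp (-x^2/2)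

lemma phiA_cont (k : ℕ) : Continuous (phiA k) := by
  unfold phiA; fun_prop

lemma int_pow_gauss (m : ℕ) : Integrable (fun x : ℝ => x ^ (2*m) * Real.exp (-x^2)) := by
  have h := integrable_rpow_mul_exp_neg_mul_sq (b := 1) one_pos (s := ((2*m : ℕ) : ℝ))
    (by push_cast; linarith [Nat.cast_nonneg (α := ℝ) m])
  simp only [Real.rpow_natCast, neg_one_mul] at h
  exact h

lemma phiA_sq (k : ℕ) (x : ℝ) : (phiA k x) ^ 2 = x ^ (2*k) * Real.exp (-x^2) := by
  unfold phiA
  rw [mul_pow, ← Real.exp_nat_mul, ← pow_mul]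
  ring_nf

lemma memL2_phiA (k : ℕ) (μ : Measure ℝ) (hμ : μ ≤ volume) : MemLp (phiA k) 2 μ := by
  have h1 : MemLp (phiA k) 2 (volume : Measure ℝ) := by
    rw [memLp_two_iff_integrable_sq (phiA_cont k).aestronglyMeasurable]
    have h := int_pow_gauss k
    apply h.congr
    filter_upwards with x using (phiA_sq k x).symm
  exact h1.mono_measure hμ

lemma mul_integrable {μ : Measure ℝ} {u v : ℝ → ℝ} (hu : MemLp u 2 μ) (hv : MemLp v 2 μ) :
    Integrable (fun x => u x * v x) μ := by
  have h := L2.integrable_inner (𝕜 := ℝ) (hu.toLp u) (hv.toLp v)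
  apply h.congr
  filter_upwards [hu.coeFn_toLp, hv.coeFn_toLp] with x h1 h2
  simp [RCLike.inner_apply, h1, h2]
  exact mul_comm _ _

noncomputable def gaussA : ℝ → ℝ := fun z => (1/Real.sqrt (2*π)) * Real.exp (-z^2/2)

lemma gaussA_nonneg (z : ℝ) : 0 ≤ gaussA z := by
  unfold gaussA; positivity

lemma gaussA_cont : Continuous gaussA := by unfold gaussA; fun_prop

lemma integrable_gaussA : Integrable gaussA := by
  have h := Integrable.const_mul (integrable_exp_neg_mul_sq (by norm_num : (0:ℝ) < 1/2)) (1/Real.sqrt (2*π))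
  apply h.congr
  filter_upwards with x
  unfold gaussA; ring_nf

lemma integral_gaussA : ∫ z, gaussA z = 1 := by
  unfold gaussA
  rw [integral_const_mul]
  have h : (fun z : ℝ => Real.exp (-z^2/2)) = fun z : ℝ => Real.exp (-((1:ℝ)/2) * z^2) := by
    funext z; ring_nf
  rw [h, integral_gaussian]
  have h2 : π / ((1:ℝ)/2) = 2 * π := by ring
  rw [h2]
  have : Real.sqrt (2*π) ≠ 0 := by positivity
  field_simp

lemma lint_gaussA_shift (x t : ℝ) :
    ∫⁻ y in Ioi t, ENNReal.ofReal (gaussA (x - y)) ≤ 1 := by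
  refine le_trans (setLIntegral_le_lintegral _ _) ?_
  have h1 : (fun y : ℝ => ENNReal.ofReal (gaussA (x - y)))
      = fun y => (fun z => ENNReal.ofReal (gaussA z)) (y - x) := by
    funext y
    have : gaussA (x - y) = gaussA (y - x) := by unfold gaussA; ring_nf
    simp [this]
  rw [h1, lintegral_sub_right_eq_self (fun z => ENNReal.ofReal (gaussA z)) x]
  rw [← ofReal_integral_eq_lintegral_ofReal integrable_gaussA
    (Filter.Eventually.of_forall gaussA_nonneg), integral_gaussA]
  simp

lemma kernel_eq (m : ℕ) (x y : ℝ) :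
    (1 / Real.sqrt (2 * π)) * Real.exp (-(x^2 + y^2)/2) *
      ∑ k ∈ Finset.range m, (x*y)^k / (Nat.factorial k : ℝ)
    = ∑ k ∈ Finset.range m, (1/(Real.sqrt (2*π) * (Nat.factorial k : ℝ))) *
        (phiA k x * phiA k y) := by
  rw [Finset.mul_sum]
  refine Finset.sum_congr rfl fun k _ => ?_
  unfold phiA
  rw [show -(x^2 + y^2)/2 = -x^2/2 + -y^2/2 by ring, Real.exp_add, mul_pow]
  field_simp

lemma kernel_le_gaussA (m : ℕ) {x y : ℝ} (hxy : 0 ≤ x*y) :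
    ∑ k ∈ Finset.range m, (1/(Real.sqrt (2*π) * (Nat.factorial k : ℝ))) *
        (phiA k x * phiA k y) ≤ gaussA (x - y) := by
  rw [← kernel_eq]
  unfold gaussA
  have h1 : ∑ k ∈ Finset.range m, (x*y)^k / (Nat.factorial k : ℝ) ≤ Real.exp (x*y) :=
    Real.sum_le_exp_of_nonneg hxy m
  have h2 : (0:ℝ) ≤ (1 / Real.sqrt (2 * π)) * Real.exp (-(x^2 + y^2)/2) := by positivity
  calc (1 / Real.sqrt (2 * π)) * Real.exp (-(x^2 + y^2)/2) *
      ∑ k ∈ Finset.range m, (x*y)^k / (Nat.factorial k : ℝ)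
      ≤ (1 / Real.sqrt (2 * π)) * Real.exp (-(x^2 + y^2)/2) * Real.exp (x*y) :=
        mul_le_mul_of_nonneg_left h1 h2
    _ = (1/Real.sqrt (2*π)) * Real.exp (-(x-y)^2/2) := by
        rw [mul_assoc, ← Real.exp_add]; ring_nf

lemma amgm2 (a b : ℝ) :
    2 * (ENNReal.ofReal a * ENNReal.ofReal b)
      ≤ ENNReal.ofReal a ^ 2 + ENNReal.ofReal b ^ 2 := by
  rcases le_or_gt a 0 with ha | ha
  · simp [ENNReal.ofReal_eq_zero.2 ha]
  rcases le_or_gt b 0 with hb | hb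
  · simp [ENNReal.ofReal_eq_zero.2 hb]
  rw [← ENNReal.ofReal_mul ha.le, ← ENNReal.ofReal_pow ha.le, ← ENNReal.ofReal_pow hb.le,
    ← ENNReal.ofReal_add (by positivity) (by positivity),
    show (2:ℝ≥0∞) = ENNReal.ofReal 2 by simp, ← ENNReal.ofReal_mul (by norm_num)]
  exact ENNReal.ofReal_le_ofReal (by nlinarith [sq_nonneg (a-b)])

lemma key_bound (t : ℝ) (ht : 0 ≤ t) (m : ℕ) {g : ℝ → ℝ} (hgm : Measurable g)
    (hg2 : Integrable (fun x => g x ^ 2) (volume.restrict (Ioi t)))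
    (hgi : ∀ k, Integrable (fun x => phiA k x * |g x|) (volume.restrict (Ioi t))) :
    ∑ k ∈ Finset.range m, (1/(Real.sqrt (2*π) * (Nat.factorial k : ℝ))) *
        (∫ x in Ioi t, phiA k x * |g x|) ^ 2
      ≤ ∫ x in Ioi t, g x ^ 2 := by
  set μ := volume.restrict (Ioi t) with hμ
  set G : ℝ → ℝ≥0∞ := fun x => ENNReal.ofReal |g x| with hGdef
  set ψ : ℕ → ℝ → ℝ≥0∞ := fun k x => ENNReal.ofReal (phiA k x) with hψdef
  set c : ℕ → ℝ := fun k => 1/(Real.sqrt (2*π) * (Nat.factorial k : ℝ)) with hcdef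
  have hc : ∀ k, 0 < c k := fun k => by
    simp only [hcdef]
    positivity
  set A : ℕ → ℝ≥0∞ := fun k => ∫⁻ x, ψ k x * G x ∂μ with hAdef
  set N : ℝ≥0∞ := ∫⁻ x, G x ^ 2 ∂μ with hNdef
  have hG : Measurable G := ENNReal.measurable_ofReal.comp hgm.abs
  have hψ : ∀ k, Measurable (ψ k) :=
    fun k => ENNReal.measurable_ofReal.comp (phiA_cont k).measurable
  have hpos : ∀ᵐ x ∂μ, 0 < x := by
    filter_upwards [ae_restrict_mem (measurableSet_Ioi (a := t))] with x hx
    exact lt_of_le_of_lt ht hx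
  have hphiA_nn : ∀ k, ∀ {x : ℝ}, 0 < x → 0 ≤ phiA k x := by
    intro k x hx
    unfold phiA
    positivity
  -- I k ≥ 0 and ofReal (I k) = A k
  have hInn : ∀ k, 0 ≤ ∫ x, phiA k x * |g x| ∂μ := by
    intro k
    apply integral_nonneg_of_ae
    filter_upwards [hpos] with x hx
    exact mul_nonneg (hphiA_nn k hx) (abs_nonneg _)
  have hIA : ∀ k, ENNReal.ofReal (∫ x, phiA k x * |g x| ∂μ) = A k := by
    intro k
    rw [ofReal_integral_eq_lintegral_ofReal (hgi k) ?nn]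
    case nn =>
      filter_upwards [hpos] with x hx
      exact mul_nonneg (hphiA_nn k hx) (abs_nonneg _)
    apply lintegral_congr_ae
    filter_upwards [hpos] with x hx
    rw [ENNReal.ofReal_mul (hphiA_nn k hx)]
  -- N = ofReal (∫ g²)
  have hN : N = ENNReal.ofReal (∫ x, g x ^ 2 ∂μ) := by
    rw [ofReal_integral_eq_lintegral_ofReal hg2
      (Filter.Eventually.of_forall fun x => sq_nonneg _)]
    apply lintegral_congr_ae
    filter_upwards with x
    rw [hGdef]
    rw [← ENNReal.ofReal_pow (abs_nonneg _), sq_abs]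
  -- main ENNReal estimate
  have hmain : ∑ k ∈ Finset.range m, ENNReal.ofReal (c k) * (A k * A k) ≤ N := by
    set W : ℝ → ℝ → ℝ≥0∞ := fun x y => ENNReal.ofReal (gaussA (x - y)) with hWdef
    have hWm : Measurable (Function.uncurry W) :=
      ENNReal.measurable_ofReal.comp (gaussA_cont.comp (continuous_fst.sub continuous_snd)).measurable
    have hWmx : ∀ x, Measurable (W x) := fun x =>
      ENNReal.measurable_ofReal.comp (gaussA_cont.comp (continuous_const.sub continuous_id)).measurable
    have hWy : ∀ x, ∫⁻ y, W x y ∂μ ≤ 1 := fun x => lint_gaussA_shift x t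
    have hWsymm : ∀ x y, W x y = W y x := by
      intro x y
      simp only [hWdef]
      congr 1
      unfold gaussA
      ring_nf
    -- the summand
    set F : ℕ → ℝ → ℝ → ℝ≥0∞ :=
      fun k x y => (ENNReal.ofReal (c k) * (ψ k x * G x)) * (ψ k y * G y) with hFdef
    have hFm : ∀ k, Measurable (Function.uncurry fun x y => F k x y) := by
      intro k
      refine Measurable.mul (f := fun p : ℝ × ℝ => ENNReal.ofReal (c k) * (ψ k p.1 * G p.1))
        (g := fun p : ℝ × ℝ => ψ k p.2 * G p.2) ?_ ?_
      · exact (measurable_const.mul (((hψ k).comp measurable_fst).mul (hG.comp measurable_fst)))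
      · exact ((hψ k).comp measurable_snd).mul (hG.comp measurable_snd)
    have hstep : ∀ k, ∫⁻ x, ∫⁻ y, F k x y ∂μ ∂μ = ENNReal.ofReal (c k) * (A k * A k) := by
      intro k
      have hmeas : Measurable fun x => ψ k x * G x := (hψ k).mul hG
      calc ∫⁻ x, ∫⁻ y, F k x y ∂μ ∂μ
          = ∫⁻ x, (ENNReal.ofReal (c k) * (ψ k x * G x)) * A k ∂μ := by
            refine lintegral_congr fun x => ?_
            exact lintegral_const_mul _ hmeas
        _ = (∫⁻ x, ENNReal.ofReal (c k) * (ψ k x * G x) ∂μ) * A k :=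
            lintegral_mul_const _ (measurable_const.mul hmeas)
        _ = (ENNReal.ofReal (c k) * A k) * A k := by rw [lintegral_const_mul _ hmeas]
        _ = ENNReal.ofReal (c k) * (A k * A k) := by ring
    -- pointwise kernel bound
    have hker : ∀ᵐ x ∂μ, ∀ᵐ y ∂μ,
        ∑ k ∈ Finset.range m, F k x y ≤ W x y * (G x * G y) := by
      filter_upwards [hpos] with x hx
      filter_upwards [hpos] with y hy
      have hsum : ∑ k ∈ Finset.range m, F k x y
          = ENNReal.ofReal (∑ k ∈ Finset.range m, c k * (phiA k x * phiA k y)) * (G x * G y) := by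
        rw [ENNReal.ofReal_sum_of_nonneg (fun k _ => mul_nonneg (hc k).le
          (mul_nonneg (hphiA_nn k hx) (hphiA_nn k hy))), Finset.sum_mul]
        refine Finset.sum_congr rfl fun k _ => ?_
        rw [ENNReal.ofReal_mul (hc k).le, ENNReal.ofReal_mul (hphiA_nn k hx)]
        simp only [hFdef, hψdef]
        ring
      rw [hsum]
      refine mul_le_mul_left ?_ _
      exact ENNReal.ofReal_le_ofReal (kernel_le_gaussA m (mul_nonneg hx.le hy.le))
    -- middle quantity
    set S2 : ℝ≥0∞ := ∫⁻ x, ∫⁻ y, W x y * (G x * G y) ∂μ ∂μ with hS2def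
    have hS_le_S2 : ∑ k ∈ Finset.range m, ENNReal.ofReal (c k) * (A k * A k) ≤ S2 := by
      rw [show ∑ k ∈ Finset.range m, ENNReal.ofReal (c k) * (A k * A k)
          = ∫⁻ x, ∫⁻ y, ∑ k ∈ Finset.range m, F k x y ∂μ ∂μ from ?_]
      · refine lintegral_mono_ae ?_
        filter_upwards [hker] with x hx
        exact lintegral_mono_ae <| by filter_upwards [hx] with y hy using hy
      · rw [← Finset.sum_congr rfl fun k _ => hstep k]
        rw [← lintegral_finset_sum _ fun k _ => (hFm k).lintegral_prod_right]
        refine lintegral_congr fun x => ?_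
        exact (lintegral_finset_sum _ fun k _ => ((hψ k).mul hG).const_mul _).symm
    -- now bound S2 by N
    have hS2_le_N : S2 ≤ N := by
      have h2 : (2:ℝ≥0∞) * S2 ≤ 2 * N := by
        have hsplit : ∀ x y, 2 * (W x y * (G x * G y)) ≤ W x y * G x^2 + W x y * G y^2 := by
          intro x y
          calc 2 * (W x y * (G x * G y)) = W x y * (2 * (G x * G y)) := by ring
            _ ≤ W x y * (G x^2 + G y^2) := mul_le_mul_right (amgm2 _ _) _
            _ = W x y * G x^2 + W x y * G y^2 := mul_add _ _ _
        have hT1 : ∫⁻ x, ∫⁻ y, W x y * G x^2 ∂μ ∂μ ≤ N := by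
          refine lintegral_mono fun x => ?_
          calc ∫⁻ y, W x y * G x^2 ∂μ = G x^2 * ∫⁻ y, W x y ∂μ := by
                rw [← lintegral_const_mul _ (hWmx x)]
                exact lintegral_congr fun y => mul_comm _ _
            _ ≤ G x^2 * 1 := mul_le_mul_right (hWy x) _
            _ = G x^2 := mul_one _
        have hT2 : ∫⁻ x, ∫⁻ y, W x y * G y^2 ∂μ ∂μ ≤ N := by
          have hswap : ∫⁻ x, ∫⁻ y, W x y * G y^2 ∂μ ∂μ = ∫⁻ y, ∫⁻ x, W x y * G y^2 ∂μ ∂μ :=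
            lintegral_lintegral_swap
              ((hWm.mul ((hG.comp measurable_snd).pow_const 2)).aemeasurable)
          rw [hswap]
          refine lintegral_mono fun y => ?_
          calc ∫⁻ x, W x y * G y^2 ∂μ = G y^2 * ∫⁻ x, W x y ∂μ := by
                rw [← lintegral_const_mul _ (show Measurable fun x => W x y from
                  ENNReal.measurable_ofReal.comp
                    (gaussA_cont.comp (continuous_id.sub continuous_const)).measurable)]
                exact lintegral_congr fun x => mul_comm _ _
            _ ≤ G y^2 * 1 := by
                refine mul_le_mul_right ?_ _
                calc ∫⁻ x, W x y ∂μ = ∫⁻ x, W y x ∂μ :=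
                      lintegral_congr fun x => hWsymm x y
                  _ ≤ 1 := hWy y
            _ = G y^2 := mul_one _
        calc (2:ℝ≥0∞) * S2 = ∫⁻ x, 2 * ∫⁻ y, W x y * (G x * G y) ∂μ ∂μ := by
              rw [hS2def]
              exact (lintegral_const_mul _
                (Measurable.lintegral_prod_right (f := fun x y => W x y * (G x * G y))
                  (hWm.mul ((hG.comp measurable_fst).mul (hG.comp measurable_snd))))).symm
          _ = ∫⁻ x, ∫⁻ y, 2 * (W x y * (G x * G y)) ∂μ ∂μ :=
              lintegral_congr fun x =>
                (lintegral_const_mul _ ((hWmx x).mul (hG.const_mul _))).symm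
          _ ≤ ∫⁻ x, ∫⁻ y, (W x y * G x^2 + W x y * G y^2) ∂μ ∂μ :=
              lintegral_mono fun x => lintegral_mono fun y => hsplit x y
          _ = (∫⁻ x, ∫⁻ y, W x y * G x^2 ∂μ ∂μ) + ∫⁻ x, ∫⁻ y, W x y * G y^2 ∂μ ∂μ := by
              rw [← lintegral_add_left ((hWm.mul ((hG.comp measurable_fst).pow_const
                2)).lintegral_prod_right)]
              refine lintegral_congr fun x => ?_
              exact lintegral_add_left ((hWmx x).mul measurable_const) _
          _ ≤ N + N := add_le_add hT1 hT2
          _ = 2 * N := (two_mul N).symm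
      exact (ENNReal.mul_le_mul_iff_right (two_ne_zero) ENNReal.ofNat_ne_top).mp h2
    exact hS_le_S2.trans hS2_le_N

  -- conclude
  have hRnn : 0 ≤ ∫ x, g x ^ 2 ∂μ := integral_nonneg fun x => sq_nonneg _
  rw [← ENNReal.ofReal_le_ofReal_iff hRnn, ← hN]
  calc ENNReal.ofReal (∑ k ∈ Finset.range m, c k * (∫ x, phiA k x * |g x| ∂μ) ^ 2)
      = ∑ k ∈ Finset.range m, ENNReal.ofReal (c k * (∫ x, phiA k x * |g x| ∂μ) ^ 2) :=
        ENNReal.ofReal_sum_of_nonneg fun k _ => mul_nonneg (hc k).le (sq_nonneg _)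
    _ = ∑ k ∈ Finset.range m, ENNReal.ofReal (c k) * (A k * A k) := by
        refine Finset.sum_congr rfl fun k _ => ?_
        rw [sq, ENNReal.ofReal_mul (hc k).le, ENNReal.ofReal_mul (hInn k), hIA k]
    _ ≤ N := hmain


lemma phiA_nonneg (k : ℕ) {x : ℝ} (hx : 0 ≤ x) : 0 ≤ phiA k x :=
  mul_nonneg (pow_nonneg hx k) (Real.exp_pos _).le

lemma Lp_coeFn_sum {α : Type*} [MeasurableSpace α] {μ : Measure α} {ι : Type*}
    (s : Finset ι) (f : ι → Lp ℝ 2 μ) :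
    ((∑ i ∈ s, f i : Lp ℝ 2 μ) : α → ℝ) =ᵐ[μ] fun x => ∑ i ∈ s, (f i : α → ℝ) x := by
  induction s using Finset.cons_induction with
  | empty => simp only [Finset.sum_empty]; exact Lp.coeFn_zero ℝ 2 μ
  | cons i s his ih =>
    rw [Finset.sum_cons]
    filter_upwards [Lp.coeFn_add (f i) (∑ j ∈ s, f j), ih] with x h1 h2
    show ((f i + ∑ j ∈ s, f j : Lp ℝ 2 μ) : α → ℝ) x = ∑ j ∈ Finset.cons i s his, (f j : α → ℝ) x
    rw [h1, Pi.add_apply, h2, Finset.sum_cons]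

/-- For `n ≥ 2` and `t ≥ 0`, the integral operator `T_n` on `L²(t,∞)` with kernel
`T_n(x,y) = (1/√(2π)) e^{-(x²+y²)/2} Σ_{k=0}^{n-2} (xy)^k/k!` is self-adjoint,
nonnegative and has operator norm at most `1`. -/
theorem stmt1 (n : ℕ) (hn : 2 ≤ n) (t : ℝ) (ht : 0 ≤ t) :
    ∃ T : Lp ℝ 2 (volume.restrict (Ioi t)) →L[ℝ] Lp ℝ 2 (volume.restrict (Ioi t)),
      (∀ f : Lp ℝ 2 (volume.restrict (Ioi t)),
        (T f : ℝ → ℝ) =ᵐ[volume.restrict (Ioi t)]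
          fun x => ∫ y in Ioi t,
            ((1 / Real.sqrt (2 * π)) * Real.exp (-(x^2 + y^2)/2) *
              ∑ k ∈ Finset.range (n - 1), (x*y)^k / (Nat.factorial k : ℝ)) * f y) ∧
      (∀ f g : Lp ℝ 2 (volume.restrict (Ioi t)),
        (inner ℝ (T f) g : ℝ) = inner ℝ f (T g)) ∧
      (∀ f : Lp ℝ 2 (volume.restrict (Ioi t)), 0 ≤ (inner ℝ f (T f) : ℝ)) ∧
      ‖T‖ ≤ 1 := by
  set μ := volume.restrict (Ioi t) with hμdef
  set m := n - 1 with hmdef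
  have hpos : ∀ᵐ x ∂μ, 0 < x := by
    filter_upwards [ae_restrict_mem (measurableSet_Ioi (a := t))] with x hx
    exact lt_of_le_of_lt ht hx
  have hφ : ∀ k, MemLp (phiA k) 2 μ := fun k => memL2_phiA k μ Measure.restrict_le_self
  set Φ : ℕ → Lp ℝ 2 μ := fun k => (hφ k).toLp (phiA k) with hΦdef
  set c : ℕ → ℝ := fun k => 1/(Real.sqrt (2*π) * (Nat.factorial k : ℝ)) with hcdef
  have hc : ∀ k, 0 < c k := fun k => by simp only [hcdef]; positivity
  set T : Lp ℝ 2 μ →L[ℝ] Lp ℝ 2 μ :=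
    ∑ k ∈ Finset.range m, c k • ((innerSL ℝ (Φ k)).smulRight (Φ k)) with hTdef
  -- inner product formula
  have hinner : ∀ f g : Lp ℝ 2 μ,
      (inner ℝ (T f) g : ℝ) = ∑ k ∈ Finset.range m,
        c k * ((inner ℝ (Φ k) f : ℝ) * (inner ℝ (Φ k) g : ℝ)) := by
    intro f g
    rw [hTdef]
    rw [ContinuousLinearMap.sum_apply, sum_inner]
    refine Finset.sum_congr rfl fun k _ => ?_
    rw [ContinuousLinearMap.smul_apply, ContinuousLinearMap.smulRight_apply, innerSL_apply_apply]
    rw [smul_smul, real_inner_smul_left, mul_assoc]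
  -- inner as integral
  have hinner_int : ∀ (k : ℕ) (f : Lp ℝ 2 μ) (g : ℝ → ℝ), (f : ℝ → ℝ) =ᵐ[μ] g →
      (inner ℝ (Φ k) f : ℝ) = ∫ x, phiA k x * g x ∂μ := by
    intro k f g hfg
    rw [L2.inner_def]
    refine integral_congr_ae ?_
    filter_upwards [(hφ k).coeFn_toLp, hfg] with x h1 h2
    simp [RCLike.inner_apply, h1, h2]
    rw [mul_comm]; exact congrArg (· * g x) h1
  -- quadratic form bound
  have hQ : ∀ f : Lp ℝ 2 μ, (inner ℝ (T f) f : ℝ) ≤ ‖f‖ ^ 2 := by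
    intro f
    obtain ⟨g, hgm, hfg⟩ : ∃ g : ℝ → ℝ, Measurable g ∧ (f : ℝ → ℝ) =ᵐ[μ] g :=
      ⟨(Lp.aestronglyMeasurable f).mk f,
        (Lp.aestronglyMeasurable f).stronglyMeasurable_mk.measurable,
        (Lp.aestronglyMeasurable f).ae_eq_mk⟩
    have hmem : MemLp g 2 μ := (Lp.memLp f).ae_eq hfg
    have habs : MemLp (fun x => |g x|) 2 μ := by
      simpa [Real.norm_eq_abs] using hmem.norm
    have hgi : ∀ k, Integrable (fun x => phiA k x * |g x|) μ :=
      fun k => mul_integrable (hφ k) habs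
    have hg2 : Integrable (fun x => g x ^ 2) μ := hmem.integrable_sq
    have hkey := key_bound t ht m hgm hg2 hgi
    have hterm : ∀ k, (inner ℝ (Φ k) f : ℝ) ^ 2 ≤ (∫ x, phiA k x * |g x| ∂μ) ^ 2 := by
      intro k
      rw [hinner_int k f g hfg, ← sq_abs]
      refine pow_le_pow_left₀ (abs_nonneg _) ?_ 2
      calc |∫ x, phiA k x * g x ∂μ| = ‖∫ x, phiA k x * g x ∂μ‖ := (Real.norm_eq_abs _).symm
        _ ≤ ∫ x, ‖phiA k x * g x‖ ∂μ := norm_integral_le_integral_norm _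
        _ = ∫ x, phiA k x * |g x| ∂μ := by
            refine integral_congr_ae ?_
            filter_upwards [hpos] with x hx
            rw [norm_mul, Real.norm_eq_abs, Real.norm_eq_abs,
              abs_of_nonneg (phiA_nonneg k hx.le)]
    calc (inner ℝ (T f) f : ℝ)
        = ∑ k ∈ Finset.range m, c k * ((inner ℝ (Φ k) f : ℝ) * (inner ℝ (Φ k) f : ℝ)) :=
          hinner f f
      _ ≤ ∑ k ∈ Finset.range m, c k * (∫ x, phiA k x * |g x| ∂μ) ^ 2 := by
          refine Finset.sum_le_sum fun k _ => ?_
          rw [← sq]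
          exact mul_le_mul_of_nonneg_left (hterm k) (hc k).le
      _ ≤ ∫ x, g x ^ 2 ∂μ := hkey
      _ = ‖f‖ ^ 2 := by
          rw [← real_inner_self_eq_norm_sq, L2.inner_def]
          refine (integral_congr_ae ?_).symm
          filter_upwards [hfg] with x hx
          simp [RCLike.inner_apply, hx, sq]
  refine ⟨T, ?_, ?_, ?_, ?_⟩
  · -- a.e. representation
    intro f
    have hTfel : T f = ∑ k ∈ Finset.range m, (c k * (inner ℝ (Φ k) f : ℝ)) • Φ k := by
      rw [hTdef, ContinuousLinearMap.sum_apply]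
      refine Finset.sum_congr rfl fun k _ => ?_
      rw [ContinuousLinearMap.smul_apply, ContinuousLinearMap.smulRight_apply, innerSL_apply_apply,
        smul_smul]
    have h1 : (T f : ℝ → ℝ) =ᵐ[μ]
        fun x => ∑ k ∈ Finset.range m, (c k * (inner ℝ (Φ k) f : ℝ)) * phiA k x := by
      rw [hTfel]
      have h2 := Lp_coeFn_sum (Finset.range m)
        (fun k => (c k * (inner ℝ (Φ k) f : ℝ)) • Φ k)
      refine h2.trans ?_
      have h3 : ∀ k, ((((c k * (inner ℝ (Φ k) f : ℝ)) • Φ k : Lp ℝ 2 μ)) : ℝ → ℝ)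
          =ᵐ[μ] fun x => (c k * (inner ℝ (Φ k) f : ℝ)) * phiA k x := by
        intro k
        filter_upwards [Lp.coeFn_smul (c k * (inner ℝ (Φ k) f : ℝ)) (Φ k),
          (hφ k).coeFn_toLp] with x hx1 hx2
        rw [hx1]
        simp [hx2]
        exact Or.inl hx2
      rw [Filter.EventuallyEq]
      have := Filter.eventually_all_finset (Finset.range m)
        (p := fun k x => ((((c k * (inner ℝ (Φ k) f : ℝ)) • Φ k : Lp ℝ 2 μ)) : ℝ → ℝ) x
          = (c k * (inner ℝ (Φ k) f : ℝ)) * phiA k x) |>.mpr fun k _ => h3 k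
      filter_upwards [this] with x hx
      exact Finset.sum_congr rfl fun k hk => hx k hk
    refine h1.trans (Filter.Eventually.of_forall fun x => ?_)
    -- pointwise computation of the integral
    have hint : ∀ k, Integrable (fun y => (c k * phiA k x) * (phiA k y * (f : ℝ → ℝ) y)) μ :=
      fun k => (mul_integrable (hφ k) (Lp.memLp f)).const_mul _
    calc ∑ k ∈ Finset.range m, (c k * (inner ℝ (Φ k) f : ℝ)) * phiA k x
        = ∑ k ∈ Finset.range m, (c k * phiA k x) * ∫ y, phiA k y * (f : ℝ → ℝ) y ∂μ := by
          refine Finset.sum_congr rfl fun k _ => ?_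
          rw [hinner_int k f _ Filter.EventuallyEq.rfl]
          ring
      _ = ∑ k ∈ Finset.range m, ∫ y, (c k * phiA k x) * (phiA k y * (f : ℝ → ℝ) y) ∂μ := by
          refine Finset.sum_congr rfl fun k _ => ?_
          rw [integral_const_mul]
      _ = ∫ y, ∑ k ∈ Finset.range m, (c k * phiA k x) * (phiA k y * (f : ℝ → ℝ) y) ∂μ :=
          (integral_finset_sum _ fun k _ => hint k).symm
      _ = ∫ y in Ioi t,
            ((1 / Real.sqrt (2 * π)) * Real.exp (-(x^2 + y^2)/2) *
              ∑ k ∈ Finset.range (n - 1), (x*y)^k / (Nat.factorial k : ℝ)) * (f : ℝ → ℝ) y := by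
          rw [← hmdef, ← hμdef]
          refine integral_congr_ae (Filter.Eventually.of_forall fun y => ?_)
          dsimp only
          rw [kernel_eq m x y, Finset.sum_mul]
          refine Finset.sum_congr rfl fun k _ => ?_
          simp only [hcdef]
          ring
  · -- symmetry
    intro f g
    calc (inner ℝ (T f) g : ℝ)
        = ∑ k ∈ Finset.range m, c k * ((inner ℝ (Φ k) f : ℝ) * (inner ℝ (Φ k) g : ℝ)) :=
          hinner f g
      _ = ∑ k ∈ Finset.range m, c k * ((inner ℝ (Φ k) g : ℝ) * (inner ℝ (Φ k) f : ℝ)) :=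
          Finset.sum_congr rfl fun k _ => by ring
      _ = (inner ℝ (T g) f : ℝ) := (hinner g f).symm
      _ = (inner ℝ f (T g) : ℝ) := real_inner_comm _ _
  · -- nonnegativity
    intro f
    rw [real_inner_comm, hinner f f]
    exact Finset.sum_nonneg fun k _ => mul_nonneg (hc k).le (mul_self_nonneg _)
  · -- operator norm
    refine ContinuousLinearMap.opNorm_le_bound T zero_le_one fun f => ?_
    rw [one_mul]
    set a : ℕ → ℝ := fun k => (inner ℝ (Φ k) f : ℝ) with hadef
    set b : ℕ → ℝ := fun k => (inner ℝ (Φ k) (T f) : ℝ) with hbdef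
    have hcs : (∑ k ∈ Finset.range m, c k * (a k * b k)) ^ 2
        ≤ (∑ k ∈ Finset.range m, c k * (a k * a k)) *
          (∑ k ∈ Finset.range m, c k * (b k * b k)) := by
      refine Finset.sum_sq_le_sum_mul_sum_of_sq_eq_mul _
        (fun k _ => mul_nonneg (hc k).le (mul_self_nonneg _))
        (fun k _ => mul_nonneg (hc k).le (mul_self_nonneg _))
        (fun k _ => by ring)
    have h1 : ‖T f‖ ^ 2 = ∑ k ∈ Finset.range m, c k * (a k * b k) := by
      rw [← real_inner_self_eq_norm_sq, real_inner_comm, hinner f (T f)]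
    have h2 : (∑ k ∈ Finset.range m, c k * (a k * a k)) ≤ ‖f‖ ^ 2 :=
      (hinner f f).symm.trans_le (hQ f)
    have h3 : (∑ k ∈ Finset.range m, c k * (b k * b k)) ≤ ‖T f‖ ^ 2 :=
      (hinner (T f) (T f)).symm.trans_le (hQ (T f))
    have h2' : (0:ℝ) ≤ ∑ k ∈ Finset.range m, c k * (a k * a k) :=
      Finset.sum_nonneg fun k _ => mul_nonneg (hc k).le (mul_self_nonneg _)
    have h3' : (0:ℝ) ≤ ∑ k ∈ Finset.range m, c k * (b k * b k) :=
      Finset.sum_nonneg fun k _ => mul_nonneg (hc k).le (mul_self_nonneg _)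
    have hkey : (‖T f‖ ^ 2) ^ 2 ≤ ‖f‖ ^ 2 * ‖T f‖ ^ 2 := by
      calc (‖T f‖ ^ 2) ^ 2 = (∑ k ∈ Finset.range m, c k * (a k * b k)) ^ 2 := by rw [h1]
        _ ≤ (∑ k ∈ Finset.range m, c k * (a k * a k)) *
            (∑ k ∈ Finset.range m, c k * (b k * b k)) := hcs
        _ ≤ ‖f‖ ^ 2 * ‖T f‖ ^ 2 := mul_le_mul h2 h3 h3' (by positivity)
    by_contra hlt
    push_neg at hlt
    have h0 : 0 < ‖T f‖ := (norm_nonneg f).trans_lt hlt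
    have h5 : ‖f‖ ^ 2 < ‖T f‖ ^ 2 := by nlinarith [norm_nonneg f]
    have h6 : ‖f‖ ^ 2 * ‖T f‖ ^ 2 < (‖T f‖ ^ 2) * (‖T f‖ ^ 2) :=
      mul_lt_mul_of_pos_right h5 (by positivity)
    nlinarith
end

section
/- For every real x > 0 and real a ≥ 1 with x + 1 - a > 0, the upper incomplete gamma function satisfies Γ(a,x) ≤ x^a e^{-x} / (x + 1 - a). -/
open MeasureTheory Real Set

lemma integral_exp_neg_mul_Ioi' {c : ℝ} (hc : 0 < c) (x : ℝ) :
    (∫ t in Ioi x, Real.exp (-(c * t))) = Real.exp (-(c * x)) / c := by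
  have hderiv : ∀ t ∈ Ici x, HasDerivAt (fun t => -Real.exp (-(c * t)) / c)
      (Real.exp (-(c * t))) t := by
    intro t _
    have h1 : HasDerivAt (fun t : ℝ => -(c * t)) (-c) t := by
      exact (((hasDerivAt_id t).const_mul c).neg : HasDerivAt (fun y => -(c * y)) (-(c * 1)) t).congr_deriv (by ring)
    have h2 := (h1.exp).neg.div_const c
    refine h2.congr_deriv ?_
    rw [mul_neg, neg_neg, mul_div_assoc, div_self hc.ne', mul_one]
  have hint : IntegrableOn (fun t => Real.exp (-(c * t))) (Ioi x) := by
    simpa [neg_mul] using exp_neg_integrableOn_Ioi x hc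
  have htend : Filter.Tendsto (fun t => -Real.exp (-(c * t)) / c) Filter.atTop (nhds 0) := by
    have h1 : Filter.Tendsto (fun t : ℝ => c * t) Filter.atTop Filter.atTop :=
      Filter.Tendsto.const_mul_atTop hc Filter.tendsto_id
    have h2 : Filter.Tendsto (fun t : ℝ => -(c * t)) Filter.atTop Filter.atBot :=
      Filter.tendsto_neg_atBot_iff.2 h1
    have := (Real.tendsto_exp_atBot.comp h2).neg.div_const c
    simpa using this
  have := MeasureTheory.integral_Ioi_of_hasDerivAt_of_tendsto' hderiv hint htend
  rw [this]
  field_simp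
  ring

/-- For `x > 0` and `a ≥ 1` with `x + 1 - a > 0`, the upper incomplete gamma function
`Γ(a,x) = ∫_x^∞ t^{a-1} e^{-t} dt` satisfies `Γ(a,x) ≤ x^a e^{-x}/(x + 1 - a)`. -/
theorem stmt4 (a x : ℝ) (hx : 0 < x) (ha : 1 ≤ a) (h : 0 < x + 1 - a) :
    (∫ s in Ioi x, s ^ (a - 1) * Real.exp (-s)) ≤ x ^ a * Real.exp (-x) / (x + 1 - a) := by
  set c : ℝ := (x + 1 - a) / x with hc_def
  have hc : 0 < c := div_pos h hx
  -- pointwise bound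
  have hbound : ∀ s ∈ Ioi x, s ^ (a - 1) * Real.exp (-s)
      ≤ x ^ (a - 1) * Real.exp (-x) * (Real.exp (c * x) * Real.exp (-(c * s))) := by
    intro s hs
    have hsx : x < s := hs
    have hs0 : 0 < s := hx.trans hsx
    have hlog : Real.log (s / x) ≤ s / x - 1 := by
      have := Real.log_le_sub_one_of_pos (div_pos hs0 hx)
      exact this
    have key : s ^ (a - 1) ≤ x ^ (a - 1) * Real.exp ((a - 1) * (s / x - 1)) := by
      have h1 : s ^ (a - 1) = x ^ (a - 1) * (s / x) ^ (a - 1) := by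
        rw [Real.div_rpow hs0.le hx.le, mul_div_cancel₀]
        exact (Real.rpow_pos_of_pos hx _).ne'
      rw [h1]
      refine mul_le_mul_of_nonneg_left ?_ (by positivity)
      have h2 : (s / x) ^ (a - 1) = Real.exp ((a - 1) * Real.log (s / x)) := by
        rw [Real.rpow_def_of_pos (div_pos hs0 hx), mul_comm]
      rw [h2]
      exact Real.exp_le_exp.2 (by nlinarith [hlog])
    calc s ^ (a - 1) * Real.exp (-s)
        ≤ x ^ (a - 1) * Real.exp ((a - 1) * (s / x - 1)) * Real.exp (-s) := by
          gcongr
      _ = x ^ (a - 1) * Real.exp (-x) * (Real.exp (c * x) * Real.exp (-(c * s))) := by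
          have heq : Real.exp ((a - 1) * (s / x - 1)) * Real.exp (-s)
              = Real.exp (-x) * (Real.exp (c * x) * Real.exp (-(c * s))) := by
            rw [← Real.exp_add, ← Real.exp_add, ← Real.exp_add]
            congr 1
            rw [hc_def]
            field_simp [hc_def]
            ring
          rw [mul_assoc, heq, ← mul_assoc]
  have hint : IntegrableOn
      (fun s => x ^ (a - 1) * Real.exp (-x) * (Real.exp (c * x) * Real.exp (-(c * s))))
      (Ioi x) := by
    have := exp_neg_integrableOn_Ioi x hc
    simpa [neg_mul, mul_assoc, IntegrableOn] using
      (this.const_mul (x ^ (a - 1) * Real.exp (-x) * Real.exp (c * x)))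
  have hmono : (∫ s in Ioi x, s ^ (a - 1) * Real.exp (-s))
      ≤ ∫ s in Ioi x, x ^ (a - 1) * Real.exp (-x) * (Real.exp (c * x) * Real.exp (-(c * s))) := by
    apply MeasureTheory.integral_mono_of_nonneg
    · filter_upwards [MeasureTheory.ae_restrict_mem measurableSet_Ioi] with s hs
      have : (0:ℝ) < s := hx.trans hs
      positivity
    · exact hint
    · filter_upwards [MeasureTheory.ae_restrict_mem measurableSet_Ioi] with s hs
      exact hbound s hs
  refine hmono.trans (le_of_eq ?_)
  rw [MeasureTheory.integral_const_mul, MeasureTheory.integral_const_mul,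
    integral_exp_neg_mul_Ioi' hc x]
  have h1 : Real.exp (c * x) * (Real.exp (-(c * x)) / c) = 1 / c := by
    rw [← mul_div_assoc, ← Real.exp_add]; simp
  rw [h1, hc_def]
  rw [show x ^ a = x ^ (a - 1) * x from by rw [← Real.rpow_add_one hx.ne']; ring_nf]
  field_simp
end

section
/- Uniformly on compact subsets of ℝ, the rescaled functions ψ̃_n(x) := ψ_n(x + √n), where ψ_n(y) = (√(2πn) (n-2)!)^{-1/2} y^{n-1} e^{-y²/2}, converge as n → ∞ to (1/√(2π)) e^{-x²}. -/
open MeasureTheory Real Set Filter Topology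

private lemma sqrt_nat_atTop' : Tendsto (fun n : ℕ => Real.sqrt n) atTop atTop := by
  refine tendsto_atTop_atTop.2 fun b => ⟨⌈b^2⌉₊, fun a ha => ?_⟩
  calc b ≤ |b| := le_abs_self b
    _ = √(b^2) := (Real.sqrt_sq_eq_abs b).symm
    _ ≤ √a := Real.sqrt_le_sqrt (le_trans (Nat.le_ceil _) (by exact_mod_cast ha))

private lemma sqrt_pow' (x : ℝ) (hx : 0 ≤ x) (n : ℕ) : (√x)^n = √(x^n) := by
  induction n with
  | zero => simp
  | succ k ih => rw [pow_succ, pow_succ, ih, ← Real.sqrt_mul (pow_nonneg hx k)]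

private lemma tendstoQ' : Tendsto (fun m : ℕ => (1+2/(m:ℝ))^m * Real.sqrt (1+2/(m:ℝ)) * Real.exp (-2) /
    (√2 * √2 * √π * Stirling.stirlingSeq m)) atTop (𝓝 (1/(2*π))) := by
  have h1 := Real.tendsto_one_add_div_pow_exp 2
  have h0 : Tendsto (fun m : ℕ => (1+2/(m:ℝ))) atTop (𝓝 1) := by
    have : Tendsto (fun m : ℕ => 2/(m:ℝ)) atTop (𝓝 0) :=
      tendsto_const_nhds.div_atTop tendsto_natCast_atTop_atTop
    simpa using tendsto_const_nhds.add this
  have h2 : Tendsto (fun m : ℕ => Real.sqrt (1+2/(m:ℝ))) atTop (𝓝 1) := by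
    have := (Real.continuous_sqrt.continuousAt (x := (1:ℝ))).tendsto.comp h0
    simpa [Function.comp_def] using this
  have h3 : Tendsto (fun m : ℕ => √2 * √2 * √π * Stirling.stirlingSeq m) atTop
      (𝓝 (√2 * √2 * √π * √π)) := tendsto_const_nhds.mul Stirling.tendsto_stirlingSeq_sqrt_pi
  have hd : (√2 * √2 * √π * √π : ℝ) = 2 * π := by
    rw [Real.mul_self_sqrt (by norm_num), mul_assoc, Real.mul_self_sqrt Real.pi_pos.le]
  have := ((h1.mul h2).mul (tendsto_const_nhds (x := Real.exp (-2)))).div h3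
    (by rw [hd]; positivity)
  convert this using 2
  · rfl
  rw [hd, Real.exp_neg]
  field_simp

private lemma q_eq' (m : ℕ) (hm : 1 ≤ m) :
    ((m+2:ℕ):ℝ)^(m+2-1) * Real.exp (-((m+2:ℕ):ℝ)) /
      (Real.sqrt (2*π*((m+2:ℕ):ℝ)) * (Nat.factorial (m+2-2) : ℝ)) =
    (1+2/(m:ℝ))^m * Real.sqrt (1+2/(m:ℝ)) * Real.exp (-2) /
      (√2 * √2 * √π * Stirling.stirlingSeq m) := by
  have hm0 : (0:ℝ) < m := by exact_mod_cast hm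
  have hSpos : 0 < Stirling.stirlingSeq m := by
    obtain ⟨k, rfl⟩ := Nat.exists_eq_add_of_le hm
    simpa [add_comm] using Stirling.stirlingSeq'_pos k
  have hfac : (Nat.factorial m : ℝ) = Stirling.stirlingSeq m * (√(2*(m:ℝ)) * ((m:ℝ)/Real.exp 1)^m) := by
    rw [Stirling.stirlingSeq]
    field_simp
  have h15 : (1+2/(m:ℝ)) = ((m:ℝ)+2)/(m:ℝ) := by field_simp
  have hs1 : √(2*π*((m:ℝ)+2)) = √2*(√π*√((m:ℝ)+2)) := by
    rw [Real.sqrt_mul (by positivity), Real.sqrt_mul (by norm_num)]; ring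
  have hs2 : √(2*(m:ℝ)) = √2*√(m:ℝ) := Real.sqrt_mul (by norm_num) _
  have hs3 : √(((m:ℝ)+2)/(m:ℝ)) = √((m:ℝ)+2)/√(m:ℝ) := Real.sqrt_div (by positivity) _
  have hexp : Real.exp (-((m:ℝ)+2)) = Real.exp (-2)/Real.exp (m:ℝ) := by
    rw [← Real.exp_sub]; ring_nf
  have hpow : ((m:ℝ)/Real.exp 1)^m = (m:ℝ)^m/Real.exp (m:ℝ) := by
    rw [div_pow, ← Real.exp_one_pow]
  have hsucc : ((m:ℝ)+2)^(m+1) = ((m:ℝ)+2)^m * (√((m:ℝ)+2) * √((m:ℝ)+2)) := by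
    rw [Real.mul_self_sqrt (by positivity), pow_succ]
  have hnm : m + 2 - 1 = m + 1 := rfl
  have hnm2 : m + 2 - 2 = m := rfl
  rw [hnm, hnm2]
  push_cast
  rw [hfac, hs1, hs2, h15, hs3, hexp, hpow, hsucc, div_pow]
  have h2ne : (√2:ℝ) ≠ 0 := by positivity
  have hπne : (√π:ℝ) ≠ 0 := by positivity
  have hAne : (√((m:ℝ)+2):ℝ) ≠ 0 := by positivity
  have hBne : (√(m:ℝ):ℝ) ≠ 0 := by positivity
  have hSne : Stirling.stirlingSeq m ≠ 0 := ne_of_gt hSpos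
  have hEne : Real.exp (m:ℝ) ≠ 0 := Real.exp_ne_zero _
  have hmne : ((m:ℝ))^m ≠ 0 := by positivity
  field_simp

private lemma tendstoA' :
    Tendsto (fun n : ℕ => Real.sqrt (1 / (Real.sqrt (2 * π * n) * (Nat.factorial (n - 2) : ℝ))) *
      (Real.sqrt n) ^ (n - 1) * Real.exp (-(n:ℝ)/2)) atTop (𝓝 (1 / Real.sqrt (2 * π))) := by
  have hq : Tendsto (fun n : ℕ => (n:ℝ)^(n-1) * Real.exp (-(n:ℝ)) /
      (Real.sqrt (2*π*(n:ℝ)) * (Nat.factorial (n-2) : ℝ))) atTop (𝓝 (1/(2*π))) := by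
    rw [← Filter.tendsto_add_atTop_iff_nat 2]
    exact tendstoQ'.congr' (by filter_upwards [eventually_ge_atTop 1] with m hm
      using (q_eq' m hm).symm)
  have h2 : Tendsto (fun n : ℕ => Real.sqrt ((n:ℝ)^(n-1) * Real.exp (-(n:ℝ)) /
      (Real.sqrt (2*π*(n:ℝ)) * (Nat.factorial (n-2) : ℝ)))) atTop (𝓝 (Real.sqrt (1/(2*π)))) :=
    (Real.continuous_sqrt.continuousAt.tendsto).comp hq
  have hlim : Real.sqrt (1/(2*π)) = 1 / Real.sqrt (2*π) := by
    rw [one_div, Real.sqrt_inv, one_div]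
  rw [← hlim]
  refine h2.congr fun n => ?_
  rw [sqrt_pow' _ n.cast_nonneg, Real.exp_half,
    ← Real.sqrt_mul (by positivity), ← Real.sqrt_mul (by positivity)]
  congr 1
  ring

set_option maxHeartbeats 2000000 in
private lemma tendstoB' (M : ℝ) (hM : 1 ≤ M) :
    TendstoUniformlyOn (fun (n : ℕ) (x : ℝ) => (1 + x / Real.sqrt n) ^ (n-1) *
      Real.exp (-(x * Real.sqrt n) - x^2/2)) (fun x => Real.exp (-x^2)) atTop (Icc (-M) M) := by
  rw [Metric.tendstoUniformlyOn_iff]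
  intro ε hε
  set C : ℝ := M + M^2 + 2*M^3 with hC
  have hCpos : 0 < C := by positivity
  have hev : ∀ᶠ n : ℕ in atTop, max (2*M+1) (max C (4*C/ε)) ≤ Real.sqrt n :=
    sqrt_nat_atTop'.eventually_ge_atTop _
  filter_upwards [hev] with n hn x hx
  obtain ⟨hs1, hs23⟩ := max_le_iff.1 hn
  obtain ⟨hs2, hs3⟩ := max_le_iff.1 hs23
  set s : ℝ := Real.sqrt n with hs
  have hM0 : (0:ℝ) < M := by linarith
  have hspos : (0:ℝ) < s := by nlinarith
  have hs1' : (1:ℝ) ≤ s := by nlinarith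
  have hsn : s^2 = (n:ℝ) := Real.sq_sqrt n.cast_nonneg
  have hn1 : 1 ≤ n := by
    rcases Nat.eq_zero_or_pos n with h | h
    · exfalso; rw [h] at hsn; push_cast at hsn; nlinarith
    · exact h
  have hxM : |x| ≤ M := abs_le.2 ⟨hx.1, hx.2⟩
  set t : ℝ := x / s with ht
  have htM : |t| ≤ M / s := by
    rw [ht, abs_div, abs_of_pos hspos]
    gcongr
  have hthalf : |t| ≤ 1/2 := by
    refine htM.trans ?_
    rw [div_le_iff₀ hspos]
    nlinarith
  have h1t : 0 < 1 + t := by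
    have := abs_le.1 hthalf
    linarith [this.1]
  set E : ℝ := Real.log (1+t) - t + t^2/2 with hE
  have hEbound : |E| ≤ 2*|t|^3 := by
    have h := Real.abs_log_sub_add_sum_range_le (x := -t)
      (by rw [abs_neg]; linarith) 2
    have hsum : (∑ i ∈ Finset.range 2, (-t)^(i+1)/((i:ℝ)+1)) = -t + t^2/2 := by
      simp [Finset.sum_range_succ]
      ring
    rw [hsum, show (1 : ℝ) - -t = 1 + t by ring, abs_neg] at h
    have heq : |E| = |(-t + t^2/2) + Real.log (1+t)| := by
      rw [hE]; congr 1; ring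
    rw [heq]
    refine h.trans ?_
    rw [div_le_iff₀ (by linarith : (0:ℝ) < 1 - |t|)]
    have h3 : (0:ℝ) ≤ |t|^3 := by positivity
    have h2t : (1:ℝ) ≤ 2*(1-|t|) := by linarith
    calc |t|^(2+1) = |t|^3 * 1 := by ring
      _ ≤ |t|^3 * (2*(1-|t|)) := by nlinarith
      _ = 2*|t|^3 * (1-|t|) := by ring
  have hcast : ((n-1:ℕ):ℝ) = (n:ℝ) - 1 := by
    push_cast [hn1]; ring
  have hge : (1:ℝ) ≤ (n:ℝ) := by exact_mod_cast hn1
  set d : ℝ := ((n:ℝ)-1)*Real.log (1+t) - x*s - x^2/2 + x^2 with hd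
  have hlog : Real.log (1+t) = E + t - t^2/2 := by rw [hE]; ring
  have hdeq : d = ((n:ℝ)-1)*E - x/s + x^2/(2*s^2) := by
    rw [hd, hlog, ht, ← hsn]
    field_simp
    ring
  have h1 : |((n:ℝ)-1)*E| ≤ 2*M^3/s := by
    rw [abs_mul]
    have hn' : |((n:ℝ)-1)| ≤ s^2 := by
      rw [abs_of_nonneg (by linarith), hsn]
      linarith
    have hE3 : |E| ≤ 2*(M/s)^3 := by
      refine hEbound.trans ?_
      have hpow3 : |t|^3 ≤ (M/s)^3 := pow_le_pow_left₀ (abs_nonneg _) htM 3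
      linarith
    have := mul_le_mul hn' hE3 (abs_nonneg _) (by positivity)
    refine this.trans (le_of_eq ?_)
    field_simp
  have h2 : |x/s| ≤ M/s := by
    rw [abs_div, abs_of_pos hspos]
    gcongr
  have h3 : |x^2/(2*s^2)| ≤ M^2/s := by
    rw [abs_div, abs_of_pos (by positivity : (0:ℝ) < 2*s^2), abs_of_nonneg (sq_nonneg x)]
    rw [div_le_div_iff₀ (by positivity) hspos]
    have hx2 : x^2 ≤ M^2 := by
      calc x^2 = |x|^2 := (sq_abs x).symm
        _ ≤ M^2 := pow_le_pow_left₀ (abs_nonneg x) hxM 2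
    have e2 : s ≤ 2*s^2 := by nlinarith
    calc x^2*s ≤ M^2*s := mul_le_mul_of_nonneg_right hx2 hspos.le
      _ ≤ M^2*(2*s^2) := mul_le_mul_of_nonneg_left e2 (sq_nonneg M)
  have habs : |d| ≤ C/s := by
    rw [hdeq]
    have a1 := abs_add_le (((n:ℝ)-1)*E - x/s) (x^2/(2*s^2))
    have a2 := abs_sub (((n:ℝ)-1)*E) (x/s)
    have hCs : 2*M^3/s + M/s + M^2/s = C/s := by
      rw [hC]; field_simp; ring
    linarith
  have hd1 : |d| ≤ 1 := habs.trans ((div_le_one hspos).2 hs2)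
  have hval : (1 + t)^(n-1) * Real.exp (-(x*s) - x^2/2) = Real.exp (-x^2 + d) := by
    have ha : (1 + t) = Real.exp (Real.log (1+t)) := (Real.exp_log h1t).symm
    rw [ha, ← Real.exp_nat_mul, ← Real.exp_add]
    congr 1
    rw [hcast, hd]
    ring
  rw [Real.dist_eq, hval, Real.exp_add]
  have key : |Real.exp (-x^2) - Real.exp (-x^2) * Real.exp d|
      = Real.exp (-x^2) * |Real.exp d - 1| := by
    rw [← abs_of_pos (Real.exp_pos (-x^2)), ← abs_mul, abs_of_pos (Real.exp_pos (-x^2)),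
      abs_sub_comm]
    congr 1
    ring
  rw [key]
  have hb1 : Real.exp (-x^2) ≤ 1 := Real.exp_le_one_iff.2 (by nlinarith [sq_nonneg x])
  have hfin : 4*C ≤ ε * s := by
    rw [div_le_iff₀ hε] at hs3
    nlinarith
  calc Real.exp (-x^2) * |Real.exp d - 1| ≤ 1 * (2*|d|) :=
      mul_le_mul hb1 (Real.abs_exp_sub_one_le hd1) (abs_nonneg _) zero_le_one
    _ = 2*|d| := one_mul _
    _ ≤ 2*(C/s) := by linarith
    _ < ε := by
      rw [mul_div_assoc'] at *
      rw [div_lt_iff₀ hspos]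
      nlinarith

/-- Uniformly on compact subsets of `ℝ`, the rescaled functions
`ψ̃_n(x) := ψ_n(x + √n)` with `ψ_n(y) = (√(2πn)(n-2)!)^{-1/2} y^{n-1} e^{-y²/2}`
converge, as `n → ∞`, to `(1/√(2π)) e^{-x²}`. -/
theorem stmt6 (K : Set ℝ) (hK : IsCompact K) :
    TendstoUniformlyOn
      (fun (n : ℕ) (x : ℝ) =>
        Real.sqrt (1 / (Real.sqrt (2 * π * n) * (Nat.factorial (n - 2) : ℝ))) *
          (x + Real.sqrt n) ^ (n - 1) * Real.exp (-(x + Real.sqrt n)^2 / 2))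
      (fun x => (1 / Real.sqrt (2 * π)) * Real.exp (-x^2)) atTop K := by
  obtain ⟨M0, hM0⟩ := hK.isBounded.subset_closedBall 0
  set M : ℝ := max M0 1 with hMdef
  have hM : (1:ℝ) ≤ M := le_max_right _ _
  have hKicc : K ⊆ Icc (-M) M := by
    intro x hx
    have := hM0 hx
    rw [Metric.mem_closedBall, Real.dist_eq, sub_zero] at this
    have hxM : |x| ≤ M := this.trans (le_max_left _ _)
    exact ⟨(abs_le.1 hxM).1, (abs_le.1 hxM).2⟩
  have hB := (tendstoB' M hM).mono hKicc
  have hA := tendstoA'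
  rw [Metric.tendstoUniformlyOn_iff] at hB ⊢
  intro ε hε
  have hε3 : 0 < ε/3 := by linarith
  have hbhalf : (1:ℝ)/√(2*π) ≤ 1/2 := by
    have h4 : (2:ℝ) ≤ √(2*π) := by
      have e1 : √(4:ℝ) = 2 := by
        rw [show (4:ℝ) = 2^2 by norm_num, Real.sqrt_sq (by norm_num : (0:ℝ) ≤ 2)]
      have e2 := Real.sqrt_le_sqrt (show (4:ℝ) ≤ 2*π by nlinarith [Real.pi_gt_three])
      linarith
    exact one_div_le_one_div_of_le (by norm_num) h4
  filter_upwards [hB (ε/3) hε3, hA.eventually (Metric.ball_mem_nhds _ hε3),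
    hA.eventually (Metric.ball_mem_nhds _ one_half_pos), eventually_ge_atTop 1]
    with n hGB hA1 hA2 hn1 x hxK
  rw [Real.dist_eq] at hA1 hA2
  set b : ℝ := 1/√(2*π) with hb
  set a : ℝ := Real.sqrt (1 / (Real.sqrt (2 * π * n) * (Nat.factorial (n - 2) : ℝ))) *
      (Real.sqrt n) ^ (n - 1) * Real.exp (-(n:ℝ)/2) with haa
  set G : ℝ := (1 + x / Real.sqrt n) ^ (n-1) * Real.exp (-(x * Real.sqrt n) - x^2/2) with hG
  have hsp : (0:ℝ) < √(n:ℝ) := Real.sqrt_pos.2 (by exact_mod_cast hn1)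
  have hsq : (√(n:ℝ))^2 = (n:ℝ) := Real.sq_sqrt n.cast_nonneg
  have heqn : Real.sqrt (1 / (Real.sqrt (2 * π * n) * (Nat.factorial (n - 2) : ℝ))) *
      (x + Real.sqrt n) ^ (n - 1) * Real.exp (-(x + Real.sqrt n)^2 / 2) = a * G := by
    have hxs : x + √(n:ℝ) = √(n:ℝ) * (1 + x/√(n:ℝ)) := by field_simp; ring
    have hexp2 : Real.exp (-(x+√(n:ℝ))^2/2) =
        Real.exp (-(n:ℝ)/2) * Real.exp (-(x*√(n:ℝ)) - x^2/2) := by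
      rw [← Real.exp_add]
      congr 1
      linear_combination (-(1:ℝ)/2) * hsq
    rw [hexp2, hxs, mul_pow, haa, hG]
    ring
  rw [Real.dist_eq, heqn]
  have hGx := hGB x hxK
  rw [Real.dist_eq] at hGx
  have ha0 : 0 ≤ a := by rw [haa]; positivity
  have ha1 : a ≤ 1 := by
    have := abs_lt.1 hA2
    linarith [this.2]
  have hex1 : Real.exp (-x^2) ≤ 1 := Real.exp_le_one_iff.2 (by nlinarith [sq_nonneg x])
  have split : b * Real.exp (-x^2) - a * G =
      (b - a) * Real.exp (-x^2) + a * (Real.exp (-x^2) - G) := by ring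
  rw [split]
  calc |(b - a) * Real.exp (-x^2) + a * (Real.exp (-x^2) - G)|
      ≤ |(b - a) * Real.exp (-x^2)| + |a * (Real.exp (-x^2) - G)| := abs_add_le _ _
    _ = |b - a| * Real.exp (-x^2) + a * |Real.exp (-x^2) - G| := by
        rw [abs_mul, abs_mul, abs_of_pos (Real.exp_pos _), abs_of_nonneg ha0]
    _ ≤ |b - a| * 1 + 1 * |Real.exp (-x^2) - G| := by
        gcongr
    _ < ε/3 + ε/3 := by
        rw [mul_one, one_mul]
        have : |b - a| < ε/3 := by rw [abs_sub_comm]; exact hA1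
        exact add_lt_add this hGx
    _ < ε := by linarith
end

section
/- Let φ, ψ : ℝ → ℝ be continuous with exponential decay at +∞ and assume φ ∈ L¹(ℝ). Let K have kernel K(x,y) = ∫_0^∞ φ(x+u)ψ(y+u) du. Then for every y,t ∈ ℝ and k ≥ 1, ∫_ℝ ((Kχ_t)^k φ_y)(x) dx = (∫_ℝ φ(x) dx) · ∫_0^∞ (Kχ_t)^k(y+t, u+t) du, where φ_y(x) = φ(x+y). -/
open MeasureTheory Real Set

/-- The kernel `K(x,y) = ∫_0^∞ φ(x+u) ψ(y+u) du`. -/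
noncomputable def Kker (φ ψ : ℝ → ℝ) (x y : ℝ) : ℝ :=
  ∫ u in Ioi (0:ℝ), φ (x + u) * ψ (y + u)

/-- The indicator `χ_{[t,∞)}`. -/
noncomputable def chi (t y : ℝ) : ℝ := if t ≤ y then 1 else 0

/-- The kernel of the operator `K χ_t`. -/
noncomputable def KtKer (φ ψ : ℝ → ℝ) (t : ℝ) (x y : ℝ) : ℝ :=
  Kker φ ψ x y * chi t y

/-- The kernel of the operator `K* χ_t`, where `K*` is the real adjoint of `K`. -/
noncomputable def KstKer (φ ψ : ℝ → ℝ) (t : ℝ) (x y : ℝ) : ℝ :=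
  Kker φ ψ y x * chi t y

/-- `kerPow A k` is the kernel of the `(k+1)`-st power of the integral operator
with kernel `A`. -/
noncomputable def kerPow (A : ℝ → ℝ → ℝ) : ℕ → ℝ → ℝ → ℝ
  | 0 => A
  | (k + 1) => fun x y => ∫ z : ℝ, kerPow A k x z * A z y

/-- Application of an integral operator with kernel `A` to a function. -/
noncomputable def opApply (A : ℝ → ℝ → ℝ) (f : ℝ → ℝ) : ℝ → ℝ :=
  fun x => ∫ y : ℝ, A x y * f y


open Function


lemma chi_nonneg (t z : ℝ) : 0 ≤ chi t z := by unfold chi; split <;> norm_num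
lemma chi_le_one (t z : ℝ) : chi t z ≤ 1 := by unfold chi; split <;> norm_num
lemma measurable_chi (t : ℝ) : Measurable (chi t) := by
  have : chi t = (Ici t).indicator (fun _ => (1:ℝ)) := by
    ext z; simp [chi, indicator]
  rw [this]; exact measurable_const.indicator measurableSet_Ici

lemma integral_chi_mul (t : ℝ) (h : ℝ → ℝ) :
    ∫ z, chi t z * h z = ∫ p in Ioi (0:ℝ), h (p + t) := by
  have h1 : ∀ z, chi t z * h z = (Ici t).indicator h z := by
    intro z; by_cases hz : t ≤ z
    · simp [chi, hz, indicator_of_mem (mem_Ici.2 hz)]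
    · simp [chi, hz, indicator_of_notMem (by simpa using hz : z ∉ Ici t)]
  simp_rw [h1]
  rw [integral_indicator measurableSet_Ici, integral_Ici_eq_integral_Ioi]
  rw [show (∫ z in Ioi t, h z) = ∫ p in Ioi (0:ℝ), h (p + t) from ?_]
  rw [← integral_indicator measurableSet_Ioi, ← integral_indicator measurableSet_Ioi,
    ← integral_add_right_eq_self (fun z => (Ioi t).indicator h z) t]
  congr 1; ext p
  by_cases hp : p ∈ Ioi (0:ℝ)
  · rw [indicator_of_mem hp, indicator_of_mem (by simpa using hp : p + t ∈ Ioi t)]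
  · rw [indicator_of_notMem hp, indicator_of_notMem (by simpa using hp)]

lemma exists_decay {f : ℝ → ℝ} {c C : ℝ} (hf : Continuous f) (hc : 0 < c)
    (hd : ∀ x, 0 ≤ x → |f x| ≤ C * Real.exp (-c * x)) (a : ℝ) :
    ∃ M, 0 ≤ M ∧ ∀ x, a ≤ x → |f x| ≤ M * Real.exp (-c * x) := by
  obtain ⟨B, hB⟩ := (isCompact_Icc (a := a) (b := 0)).exists_bound_of_continuousOn
    (((hf.abs.mul ((Real.continuous_exp.comp (continuous_const.mul continuous_id)) : Continuous fun x : ℝ => Real.exp (c * x))) : Continuous fun x : ℝ => |f x| * Real.exp (c * x)).continuousOn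
      (s := Icc a 0))
  refine ⟨max (max B C) 0, le_max_right _ _, ?_⟩
  intro x hx
  rcases le_or_gt 0 x with h0 | h0
  · refine (hd x h0).trans (mul_le_mul_of_nonneg_right ?_ (Real.exp_nonneg _))
    exact le_trans (le_max_right B C) (le_max_left _ _)
  · have hmem : x ∈ Icc a 0 := ⟨hx, h0.le⟩
    have h1 : |f x| * Real.exp (c * x) ≤ B := by
      have := hB x hmem
      have h' := this
      simp only [Pi.mul_apply] at h'
      rw [Real.norm_eq_abs, abs_mul, abs_abs, abs_of_pos (Real.exp_pos _)] at h'
      simpa using h'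
    have h2 : |f x| = (|f x| * Real.exp (c * x)) * Real.exp (-c * x) := by
      rw [mul_assoc, ← Real.exp_add]; ring_nf; simp
    rw [h2]
    refine mul_le_mul_of_nonneg_right (h1.trans ?_) (Real.exp_nonneg _)
    exact le_trans (le_max_left B C) (le_max_left _ _)



noncomputable def Srho (c t z : ℝ) : ℝ := chi t z * Real.exp (-c * z)

noncomputable def SPhit (φ : ℝ → ℝ) (c x : ℝ) : ℝ :=
  ∫ u in Ioi (0:ℝ), |φ (x + u)| * Real.exp (-c * u)

lemma Srho_nonneg (c t z : ℝ) : 0 ≤ Srho c t z := by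
  unfold Srho chi; split <;> [positivity; simp]

lemma Srho_le (c t : ℝ) (hc : 0 < c) (z : ℝ) : Srho c t z ≤ Real.exp (-c * t) := by
  unfold Srho chi; split
  · rename_i h
    simpa using Real.exp_le_exp.2 (by nlinarith)
  · rw [zero_mul]; exact (Real.exp_pos _).le

lemma measurable_Srho (c t : ℝ) : Measurable (Srho c t) := by
  have h : Srho c t = fun z => (Ici t).indicator (fun _ => (1:ℝ)) z * Real.exp (-c * z) := by
    ext z; unfold Srho chi; by_cases hz : t ≤ z <;> simp [hz, indicator, mem_Ici]
  rw [h]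
  exact (measurable_const.indicator measurableSet_Ici).mul
    (Real.measurable_exp.comp (measurable_const.mul measurable_id))

lemma integrable_Srho (c t : ℝ) (hc : 0 < c) : Integrable (Srho c t) := by
  have h : Srho c t = (Ici t).indicator (fun z => Real.exp (-c * z)) := by
    ext z; unfold Srho chi; by_cases hz : t ≤ z <;> simp [hz, indicator, mem_Ici]
  rw [h, integrable_indicator_iff measurableSet_Ici]
  rw [integrableOn_Ici_iff_integrableOn_Ioi]
  exact exp_neg_integrableOn_Ioi t hc

-- joint integrability of (x,u) ↦ |φ(x+u)| e^{-cu} on ℝ × Ioi 0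
lemma phiexp_prod_integrable {φ : ℝ → ℝ} {c : ℝ} (hφ : Continuous φ)
    (hφ1 : Integrable φ) (hc : 0 < c) :
    Integrable (fun p : ℝ × ℝ => |φ (p.1 + p.2)| * Real.exp (-c * p.2))
      ((volume : Measure ℝ).prod ((volume : Measure ℝ).restrict (Ioi 0))) := by
  have hmeas : AEStronglyMeasurable
      (fun p : ℝ × ℝ => |φ (p.1 + p.2)| * Real.exp (-c * p.2))
      ((volume : Measure ℝ).prod ((volume : Measure ℝ).restrict (Ioi 0))) := by
    apply Continuous.aestronglyMeasurable
    exact ((hφ.comp (continuous_fst.add continuous_snd)).abs).mul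
      (Real.continuous_exp.comp (continuous_const.mul continuous_snd))
  rw [integrable_prod_iff' hmeas]
  constructor
  · filter_upwards with u
    exact ((hφ1.abs.comp_add_right u).mul_const _)
  · have heq : ∀ u : ℝ, (∫ x, ‖|φ (x + u)| * Real.exp (-c * u)‖)
        = (∫ x, |φ x|) * Real.exp (-c * u) := by
      intro u
      have : ∀ x : ℝ, ‖|φ (x + u)| * Real.exp (-c * u)‖ = |φ (x + u)| * Real.exp (-c * u) := by
        intro x; rw [Real.norm_eq_abs, abs_mul, abs_abs, abs_of_pos (Real.exp_pos _)]
      simp_rw [this, integral_mul_const]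
      congr 1
      exact integral_add_right_eq_self (fun x => |φ x|) u
    simp_rw [heq]
    exact (exp_neg_integrableOn_Ioi 0 hc).const_mul _

lemma SPhit_nonneg (φ : ℝ → ℝ) (c x : ℝ) : 0 ≤ SPhit φ c x :=
  integral_nonneg (fun u => by positivity)

lemma measurable_SPhit {φ : ℝ → ℝ} (hφ : Continuous φ) (c : ℝ) :
    StronglyMeasurable (SPhit φ c) := by
  apply StronglyMeasurable.integral_prod_right' (f := fun p : ℝ × ℝ => |φ (p.1 + p.2)| * Real.exp (-c * p.2))
  apply Continuous.stronglyMeasurable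
  exact ((hφ.comp (continuous_fst.add continuous_snd)).abs).mul
    (Real.continuous_exp.comp (continuous_const.mul continuous_snd))

lemma integrable_SPhit {φ : ℝ → ℝ} {c : ℝ} (hφ : Continuous φ) (hφ1 : Integrable φ)
    (hc : 0 < c) : Integrable (SPhit φ c) := by
  have h := (phiexp_prod_integrable hφ hφ1 hc).integral_norm_prod_left
  refine h.congr (Filter.Eventually.of_forall fun x => ?_)
  unfold SPhit
  refine integral_congr_ae (Filter.Eventually.of_forall fun u => ?_)
  simp only [Real.norm_eq_abs, abs_mul, abs_abs, abs_of_pos (Real.exp_pos _)]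

lemma SPhit_le {φ : ℝ → ℝ} {c : ℝ} (hφ1 : Integrable φ) (hc : 0 < c) (x : ℝ) :
    SPhit φ c x ≤ ∫ w, |φ w| := by
  unfold SPhit
  calc ∫ u in Ioi (0:ℝ), |φ (x + u)| * Real.exp (-c * u)
      ≤ ∫ u in Ioi (0:ℝ), |φ (x + u)| := by
        apply integral_mono_of_nonneg
        · filter_upwards with u; positivity
        · exact (hφ1.abs.comp_add_left x).integrableOn
        · filter_upwards [ae_restrict_mem measurableSet_Ioi] with u hu
          nth_rewrite 2 [show |φ (x + u)| = |φ (x + u)| * 1 by ring]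
          apply mul_le_mul_of_nonneg_left _ (abs_nonneg _)
          exact Real.exp_le_one_iff.2 (by nlinarith [le_of_lt (mem_Ioi.1 hu)])
    _ ≤ ∫ u, |φ (x + u)| := setIntegral_le_integral (hφ1.abs.comp_add_left x)
        (Filter.Eventually.of_forall fun u => abs_nonneg _)
    _ = ∫ w, |φ w| := integral_add_left_eq_self (fun w => |φ w|) x

-- integrable dominator product helper
lemma integrable_of_dom {μ ν : Measure ℝ} [SFinite μ] [SFinite ν] {f : ℝ → ℝ → ℝ} {g h : ℝ → ℝ}
    (hf : AEStronglyMeasurable (uncurry f) (μ.prod ν)) (hg : Integrable g μ)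
    (hh : Integrable h ν) (hb : ∀ x y, |f x y| ≤ g x * h y) :
    Integrable (uncurry f) (μ.prod ν) := by
  refine (hg.mul_prod hh).mono hf (Filter.Eventually.of_forall fun p => ?_)
  rw [Real.norm_eq_abs, Real.norm_eq_abs]
  exact (hb p.1 p.2).trans (le_abs_self _)

section Kernels
variable {φ ψ : ℝ → ℝ} {c C t : ℝ}

lemma sm_Kker (hφ : Continuous φ) (hψ : Continuous ψ) :
    StronglyMeasurable (fun p : ℝ × ℝ => Kker φ ψ p.1 p.2) := by
  have h : (fun p : ℝ × ℝ => Kker φ ψ p.1 p.2)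
      = fun p : ℝ × ℝ => ∫ u in Ioi (0:ℝ),
          (fun q : (ℝ × ℝ) × ℝ => φ (q.1.1 + q.2) * ψ (q.1.2 + q.2)) (p, u) := rfl
  rw [h]
  exact (((hφ.comp ((continuous_fst.comp continuous_fst).add continuous_snd)).mul
    (hψ.comp ((continuous_snd.comp continuous_fst).add
      continuous_snd))).stronglyMeasurable).integral_prod_right'

lemma sm_KtKer (hφ : Continuous φ) (hψ : Continuous ψ) (t : ℝ) :
    StronglyMeasurable (fun p : ℝ × ℝ => KtKer φ ψ t p.1 p.2) :=
  (sm_Kker hφ hψ).mul (((measurable_chi t).comp measurable_snd).stronglyMeasurable)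

lemma sm_kerPow (hφ : Continuous φ) (hψ : Continuous ψ) (t : ℝ) :
    ∀ m, StronglyMeasurable (fun p : ℝ × ℝ => kerPow (KtKer φ ψ t) m p.1 p.2)
  | 0 => sm_KtKer hφ hψ t
  | (m+1) => by
    have h : (fun p : ℝ × ℝ => kerPow (KtKer φ ψ t) (m+1) p.1 p.2)
        = fun p : ℝ × ℝ => ∫ w, (fun q : (ℝ × ℝ) × ℝ =>
            kerPow (KtKer φ ψ t) m q.1.1 q.2 * KtKer φ ψ t q.2 q.1.2) (p, w) := rfl
    rw [h]
    have hsm : StronglyMeasurable (fun q : (ℝ × ℝ) × ℝ =>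
        kerPow (KtKer φ ψ t) m q.1.1 q.2 * KtKer φ ψ t q.2 q.1.2) :=
      ((sm_kerPow hφ hψ t m).comp_measurable
        ((measurable_fst.fst).prodMk measurable_snd)).mul
      ((sm_KtKer hφ hψ t).comp_measurable (measurable_snd.prodMk measurable_fst.snd))
    exact hsm.integral_prod_right'

lemma integrableOn_phiexp (hφ : Continuous φ) (hφ1 : Integrable φ) (hc : 0 < c) (x : ℝ) :
    IntegrableOn (fun u => |φ (x + u)| * Real.exp (-c * u)) (Ioi 0) := by
  refine Integrable.mono ((hφ1.abs.comp_add_left x).integrableOn)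
    ((((hφ.comp (continuous_const.add continuous_id)).abs.mul
      (Real.continuous_exp.comp (continuous_const.mul continuous_id))).aestronglyMeasurable).restrict)
    ?_
  filter_upwards [ae_restrict_mem measurableSet_Ioi] with u hu
  simp only [Real.norm_eq_abs, abs_mul, abs_abs, abs_of_pos (Real.exp_pos (-c * u))]
  nth_rewrite 2 [show |φ (x + u)| = |φ (x + u)| * 1 by ring]
  exact mul_le_mul_of_nonneg_left
    (Real.exp_le_one_iff.2 (by nlinarith [le_of_lt (mem_Ioi.1 hu)])) (abs_nonneg _)

lemma abs_KtKer_le (hφ : Continuous φ) (hψ : Continuous ψ) (hc : 0 < c)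
    (hdψ : ∀ x, 0 ≤ x → |ψ x| ≤ C * Real.exp (-c * x)) (hφ1 : Integrable φ) (t : ℝ) :
    ∃ MA, 0 ≤ MA ∧ ∀ x z, |KtKer φ ψ t x z| ≤ MA * SPhit φ c x * Srho c t z := by
  obtain ⟨Mψ, hMψ0, hMψ⟩ := exists_decay hψ hc hdψ t
  refine ⟨Mψ, hMψ0, fun x z => ?_⟩
  by_cases hz : t ≤ z
  · have hchi : chi t z = 1 := by unfold chi; rw [if_pos hz]
    have hrho : Srho c t z = Real.exp (-c * z) := by
      unfold Srho; rw [hchi, one_mul]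
    unfold KtKer Kker
    rw [hchi, mul_one, hrho]
    calc |∫ u in Ioi (0:ℝ), φ (x + u) * ψ (z + u)|
          ≤ ∫ u in Ioi (0:ℝ), ‖φ (x + u) * ψ (z + u)‖ := by
          rw [← Real.norm_eq_abs]; exact norm_integral_le_integral_norm _
      _ ≤ ∫ u in Ioi (0:ℝ), (Mψ * Real.exp (-c * z)) * (|φ (x + u)| * Real.exp (-c * u)) := by
          apply integral_mono_of_nonneg
          · filter_upwards with u; positivity
          · exact (integrableOn_phiexp hφ hφ1 hc x).const_mul _
          · filter_upwards [ae_restrict_mem measurableSet_Ioi] with u hu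
            rw [Real.norm_eq_abs, abs_mul]
            have h1 : |ψ (z + u)| ≤ Mψ * Real.exp (-c * (z + u)) :=
              hMψ (z + u) (by nlinarith [le_of_lt (mem_Ioi.1 hu)])
            have h2 : Real.exp (-c * (z + u)) = Real.exp (-c * z) * Real.exp (-c * u) := by
              rw [← Real.exp_add]; ring_nf
            calc |φ (x + u)| * |ψ (z + u)|
                ≤ |φ (x + u)| * (Mψ * Real.exp (-c * (z + u))) :=
                  mul_le_mul_of_nonneg_left h1 (abs_nonneg _)
              _ = (Mψ * Real.exp (-c * z)) * (|φ (x + u)| * Real.exp (-c * u)) := by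
                  rw [h2]; ring
      _ = (Mψ * Real.exp (-c * z)) * SPhit φ c x := integral_const_mul _ _
      _ = Mψ * SPhit φ c x * Real.exp (-c * z) := by ring
  · have hchi : chi t z = 0 := by unfold chi; rw [if_neg hz]
    have hrho : Srho c t z = 0 := by unfold Srho; rw [hchi, zero_mul]
    unfold KtKer
    rw [hchi, hrho, mul_zero, mul_zero, abs_zero]

lemma integrable_SrhoPhit (hφ : Continuous φ) (hφ1 : Integrable φ) (hc : 0 < c) (t : ℝ) :
    Integrable (fun w => Srho c t w * SPhit φ c w) := by
  refine Integrable.mono ((integrable_SPhit hφ hφ1 hc).const_mul (Real.exp (-c * t)))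
    (((measurable_Srho c t).stronglyMeasurable.mul (measurable_SPhit hφ c)).aestronglyMeasurable)
    ?_
  filter_upwards with w
  rw [Real.norm_eq_abs, Real.norm_eq_abs,
    abs_of_nonneg (mul_nonneg (Srho_nonneg c t w) (SPhit_nonneg φ c w)),
    abs_of_nonneg (mul_nonneg (Real.exp_nonneg _) (SPhit_nonneg φ c w))]
  exact mul_le_mul_of_nonneg_right (Srho_le c t hc w) (SPhit_nonneg φ c w)

lemma abs_kerPow_le (hφ : Continuous φ) (hψ : Continuous ψ) (hc : 0 < c)
    (hdψ : ∀ x, 0 ≤ x → |ψ x| ≤ C * Real.exp (-c * x)) (hφ1 : Integrable φ) (t : ℝ) :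
    ∀ m, ∃ D, 0 ≤ D ∧ ∀ x z, |kerPow (KtKer φ ψ t) m x z| ≤ D * SPhit φ c x * Srho c t z := by
  intro m
  induction m with
  | zero => exact abs_KtKer_le hφ hψ hc hdψ hφ1 t
  | succ m ih =>
    obtain ⟨D, hD0, hD⟩ := ih
    obtain ⟨MA, hMA0, hMA⟩ := abs_KtKer_le hφ hψ hc hdψ hφ1 t (C := C)
    set Irp := ∫ w, Srho c t w * SPhit φ c w with hIrp
    have hIrp0 : 0 ≤ Irp := integral_nonneg fun w =>
      mul_nonneg (Srho_nonneg c t w) (SPhit_nonneg φ c w)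
    refine ⟨D * MA * Irp, by positivity, fun x z => ?_⟩
    have hstep : |kerPow (KtKer φ ψ t) (m+1) x z|
        ≤ ∫ w, (D * MA * SPhit φ c x * Srho c t z) * (Srho c t w * SPhit φ c w) := by
      have hrfl : kerPow (KtKer φ ψ t) (m+1) x z
          = ∫ w, kerPow (KtKer φ ψ t) m x w * KtKer φ ψ t w z := rfl
      rw [hrfl]
      calc |∫ w, kerPow (KtKer φ ψ t) m x w * KtKer φ ψ t w z|
          ≤ ∫ w, ‖kerPow (KtKer φ ψ t) m x w * KtKer φ ψ t w z‖ := by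
            rw [← Real.norm_eq_abs]; exact norm_integral_le_integral_norm _
        _ ≤ _ := by
            apply integral_mono_of_nonneg
            · filter_upwards with w; positivity
            · exact (integrable_SrhoPhit hφ hφ1 hc t).const_mul _
            · filter_upwards with w
              rw [Real.norm_eq_abs, abs_mul]
              calc |kerPow (KtKer φ ψ t) m x w| * |KtKer φ ψ t w z|
                  ≤ (D * SPhit φ c x * Srho c t w) * (MA * SPhit φ c w * Srho c t z) := by
                    exact mul_le_mul (hD x w) (hMA w z) (abs_nonneg _)
                      (mul_nonneg (mul_nonneg hD0 (SPhit_nonneg _ _ _)) (Srho_nonneg _ _ _))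
                _ = (D * MA * SPhit φ c x * Srho c t z) * (Srho c t w * SPhit φ c w) := by
                    ring
    rw [integral_const_mul] at hstep
    calc |kerPow (KtKer φ ψ t) (m+1) x z|
        ≤ (D * MA * SPhit φ c x * Srho c t z) * Irp := hstep
      _ = D * MA * Irp * SPhit φ c x * Srho c t z := by ring

end Kernels

noncomputable def Scseq (φ ψ : ℝ → ℝ) (t : ℝ) : ℕ → ℝ → ℝ
  | 0 => fun z => chi t z * ∫ u in Ioi (0:ℝ), ψ (z + u)
  | (m+1) => fun z => ∫ w, Scseq φ ψ t m w * KtKer φ ψ t w z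

noncomputable def Sg (φ ψ : ℝ → ℝ) (t y : ℝ) (j : ℕ) : ℝ → ℝ :=
  (opApply (KtKer φ ψ t))^[j] (fun z => φ (z + y))

section GC
variable {φ ψ : ℝ → ℝ} {c C t y : ℝ}

lemma Sg_succ (j : ℕ) :
    Sg φ ψ t y (j+1) = fun x => ∫ z, KtKer φ ψ t x z * Sg φ ψ t y j z := by
  unfold Sg; rw [Function.iterate_succ_apply']; rfl

lemma sm_Scseq (hφ : Continuous φ) (hψ : Continuous ψ) (t : ℝ) :
    ∀ m, StronglyMeasurable (Scseq φ ψ t m)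
  | 0 => by
    have hsm : StronglyMeasurable (fun q : ℝ × ℝ => ψ (q.1 + q.2)) :=
      (hψ.comp (continuous_fst.add continuous_snd)).stronglyMeasurable
    exact ((measurable_chi t).stronglyMeasurable).mul hsm.integral_prod_right'
  | (m+1) => by
    have hsm : StronglyMeasurable (fun q : ℝ × ℝ => Scseq φ ψ t m q.2 * KtKer φ ψ t q.2 q.1) :=
      ((sm_Scseq hφ hψ t m).comp_measurable measurable_snd).mul
        ((sm_KtKer hφ hψ t).comp_measurable (measurable_snd.prodMk measurable_fst))
    exact hsm.integral_prod_right'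

lemma sm_Sg (hφ : Continuous φ) (hψ : Continuous ψ) (t y : ℝ) :
    ∀ j, StronglyMeasurable (Sg φ ψ t y j)
  | 0 => (hφ.comp (continuous_id.add continuous_const)).stronglyMeasurable
  | (j+1) => by
    rw [Sg_succ]
    have hsm : StronglyMeasurable (fun q : ℝ × ℝ => KtKer φ ψ t q.1 q.2 * Sg φ ψ t y j q.2) :=
      (sm_KtKer hφ hψ t).mul ((sm_Sg hφ hψ t y j).comp_measurable measurable_snd)
    exact hsm.integral_prod_right'

lemma abs_Scseq_le (hφ : Continuous φ) (hψ : Continuous ψ) (hc : 0 < c)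
    (hdψ : ∀ x, 0 ≤ x → |ψ x| ≤ C * Real.exp (-c * x)) (hφ1 : Integrable φ) (t : ℝ) :
    ∀ m, ∃ E, 0 ≤ E ∧ ∀ z, |Scseq φ ψ t m z| ≤ E * Srho c t z := by
  intro m
  induction m with
  | zero =>
    obtain ⟨Mψ, hMψ0, hMψ⟩ := exists_decay hψ hc hdψ t
    set Ie := ∫ u in Ioi (0:ℝ), Real.exp (-c * u) with hIe
    have hIe0 : 0 ≤ Ie := integral_nonneg fun u => (Real.exp_pos _).le
    refine ⟨Mψ * Ie, by positivity, fun z => ?_⟩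
    by_cases hz : t ≤ z
    · have hchi : chi t z = 1 := by unfold chi; rw [if_pos hz]
      have hrho : Srho c t z = Real.exp (-c * z) := by unfold Srho; rw [hchi, one_mul]
      show |chi t z * ∫ u in Ioi (0:ℝ), ψ (z + u)| ≤ _
      rw [hchi, one_mul, hrho]
      calc |∫ u in Ioi (0:ℝ), ψ (z + u)| ≤ ∫ u in Ioi (0:ℝ), ‖ψ (z + u)‖ := by
            rw [← Real.norm_eq_abs]; exact norm_integral_le_integral_norm _
        _ ≤ ∫ u in Ioi (0:ℝ), (Mψ * Real.exp (-c * z)) * Real.exp (-c * u) := by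
            apply integral_mono_of_nonneg
            · filter_upwards with u; positivity
            · exact (exp_neg_integrableOn_Ioi 0 hc).const_mul _
            · filter_upwards [ae_restrict_mem measurableSet_Ioi] with u hu
              rw [Real.norm_eq_abs]
              have h1 := hMψ (z + u) (by nlinarith [le_of_lt (mem_Ioi.1 hu)])
              have h2 : Real.exp (-c * (z + u)) = Real.exp (-c * z) * Real.exp (-c * u) := by
                rw [← Real.exp_add]; ring_nf
              calc |ψ (z + u)| ≤ Mψ * Real.exp (-c * (z + u)) := h1
                _ = (Mψ * Real.exp (-c * z)) * Real.exp (-c * u) := by rw [h2]; ring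
        _ = (Mψ * Real.exp (-c * z)) * Ie := integral_const_mul _ _
        _ = Mψ * Ie * Real.exp (-c * z) := by ring
    · have hchi : chi t z = 0 := by unfold chi; rw [if_neg hz]
      have hrho : Srho c t z = 0 := by unfold Srho; rw [hchi, zero_mul]
      show |chi t z * ∫ u in Ioi (0:ℝ), ψ (z + u)| ≤ _
      rw [hchi, hrho, zero_mul, abs_zero, mul_zero]
  | succ m ih =>
    obtain ⟨E, hE0, hE⟩ := ih
    obtain ⟨MA, hMA0, hMA⟩ := abs_KtKer_le hφ hψ hc hdψ hφ1 t (C := C)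
    set Irp := ∫ w, Srho c t w * SPhit φ c w with hIrp
    have hIrp0 : 0 ≤ Irp := integral_nonneg fun w =>
      mul_nonneg (Srho_nonneg c t w) (SPhit_nonneg φ c w)
    refine ⟨E * MA * Irp, by positivity, fun z => ?_⟩
    have hstep : |Scseq φ ψ t (m+1) z|
        ≤ ∫ w, (E * MA * Srho c t z) * (Srho c t w * SPhit φ c w) := by
      show |∫ w, Scseq φ ψ t m w * KtKer φ ψ t w z| ≤ _
      calc |∫ w, Scseq φ ψ t m w * KtKer φ ψ t w z|
          ≤ ∫ w, ‖Scseq φ ψ t m w * KtKer φ ψ t w z‖ := by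
            rw [← Real.norm_eq_abs]; exact norm_integral_le_integral_norm _
        _ ≤ _ := by
            apply integral_mono_of_nonneg
            · filter_upwards with w; positivity
            · exact (integrable_SrhoPhit hφ hφ1 hc t).const_mul _
            · filter_upwards with w
              rw [Real.norm_eq_abs, abs_mul]
              calc |Scseq φ ψ t m w| * |KtKer φ ψ t w z|
                  ≤ (E * Srho c t w) * (MA * SPhit φ c w * Srho c t z) :=
                    mul_le_mul (hE w) (hMA w z) (abs_nonneg _)
                      (mul_nonneg hE0 (Srho_nonneg _ _ _))
                _ = (E * MA * Srho c t z) * (Srho c t w * SPhit φ c w) := by ring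
    rw [integral_const_mul] at hstep
    calc |Scseq φ ψ t (m+1) z| ≤ (E * MA * Srho c t z) * Irp := hstep
      _ = E * MA * Irp * Srho c t z := by ring

lemma opApply_bound (hφ : Continuous φ) (hψ : Continuous ψ) (hc : 0 < c)
    (hdψ : ∀ x, 0 ≤ x → |ψ x| ≤ C * Real.exp (-c * x)) (hφ1 : Integrable φ) (t : ℝ)
    {h : ℝ → ℝ} (hint : Integrable (fun z => Srho c t z * |h z|)) :
    ∃ F, 0 ≤ F ∧ ∀ x, |opApply (KtKer φ ψ t) h x| ≤ F * SPhit φ c x := by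
  obtain ⟨MA, hMA0, hMA⟩ := abs_KtKer_le hφ hψ hc hdψ hφ1 t (C := C)
  set Ih := ∫ z, Srho c t z * |h z| with hIh
  have hIh0 : 0 ≤ Ih := integral_nonneg fun z => mul_nonneg (Srho_nonneg _ _ _) (abs_nonneg _)
  refine ⟨MA * Ih, by positivity, fun x => ?_⟩
  have hstep : |opApply (KtKer φ ψ t) h x|
      ≤ ∫ z, (MA * SPhit φ c x) * (Srho c t z * |h z|) := by
    show |∫ z, KtKer φ ψ t x z * h z| ≤ _
    calc |∫ z, KtKer φ ψ t x z * h z| ≤ ∫ z, ‖KtKer φ ψ t x z * h z‖ := by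
          rw [← Real.norm_eq_abs]; exact norm_integral_le_integral_norm _
      _ ≤ _ := by
          apply integral_mono_of_nonneg
          · filter_upwards with z; positivity
          · exact hint.const_mul _
          · filter_upwards with z
            rw [Real.norm_eq_abs, abs_mul]
            calc |KtKer φ ψ t x z| * |h z| ≤ (MA * SPhit φ c x * Srho c t z) * |h z| :=
                  mul_le_mul_of_nonneg_right (hMA x z) (abs_nonneg _)
              _ = (MA * SPhit φ c x) * (Srho c t z * |h z|) := by ring
  rw [integral_const_mul] at hstep
  calc |opApply (KtKer φ ψ t) h x| ≤ (MA * SPhit φ c x) * Ih := hstep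
    _ = MA * Ih * SPhit φ c x := by ring

lemma Sg_rg_int (hφ : Continuous φ) (hψ : Continuous ψ) (hc : 0 < c)
    (hdψ : ∀ x, 0 ≤ x → |ψ x| ≤ C * Real.exp (-c * x)) (hφ1 : Integrable φ) (t y : ℝ) :
    ∀ j, Integrable (fun z => Srho c t z * |Sg φ ψ t y j z|) := by
  intro j
  induction j with
  | zero =>
    refine Integrable.mono ((hφ1.abs.comp_add_right y).const_mul (Real.exp (-c * t)))
      (((measurable_Srho c t).mul
        (sm_Sg hφ hψ t y 0).measurable.abs).aestronglyMeasurable) ?_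
    filter_upwards with z
    rw [Real.norm_eq_abs, Real.norm_eq_abs,
      abs_of_nonneg (mul_nonneg (Srho_nonneg _ _ _) (abs_nonneg _)),
      abs_of_nonneg (mul_nonneg (Real.exp_nonneg _) (abs_nonneg _))]
    exact mul_le_mul_of_nonneg_right (Srho_le c t hc z) (abs_nonneg _)
  | succ j ih =>
    obtain ⟨F, hF0, hF⟩ := opApply_bound hφ hψ hc hdψ hφ1 t ih
    refine Integrable.mono ((integrable_SrhoPhit hφ hφ1 hc t).const_mul F)
      (((measurable_Srho c t).mul
        (sm_Sg hφ hψ t y (j+1)).measurable.abs).aestronglyMeasurable) ?_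
    filter_upwards with z
    rw [Real.norm_eq_abs, Real.norm_eq_abs,
      abs_of_nonneg (mul_nonneg (Srho_nonneg _ _ _) (abs_nonneg _)),
      abs_of_nonneg (mul_nonneg hF0 (mul_nonneg (Srho_nonneg _ _ _) (SPhit_nonneg _ _ _)))]
    have : |Sg φ ψ t y (j+1) z| ≤ F * SPhit φ c z := by
      have h1 : Sg φ ψ t y (j+1) z = opApply (KtKer φ ψ t) (Sg φ ψ t y j) z := by
        rw [Sg_succ]; rfl
      rw [h1]; exact hF z
    calc Srho c t z * |Sg φ ψ t y (j+1) z| ≤ Srho c t z * (F * SPhit φ c z) :=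
          mul_le_mul_of_nonneg_left this (Srho_nonneg _ _ _)
      _ = F * (Srho c t z * SPhit φ c z) := by ring

end GC

section Swap
variable {φ ψ : ℝ → ℝ} {c C t y : ℝ}

lemma intA (hφ : Continuous φ) (hψ : Continuous ψ) (hc : 0 < c)
    (hdψ : ∀ x, 0 ≤ x → |ψ x| ≤ C * Real.exp (-c * x)) (hφ1 : Integrable φ) (t z : ℝ) :
    ∫ x, KtKer φ ψ t x z = (∫ x, φ x) * Scseq φ ψ t 0 z := by
  have h0 : Scseq φ ψ t 0 z = chi t z * ∫ u in Ioi (0:ℝ), ψ (z + u) := rfl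
  by_cases hz : t ≤ z
  · have hchi : chi t z = 1 := by unfold chi; rw [if_pos hz]
    obtain ⟨Mψ, hMψ0, hMψ⟩ := exists_decay hψ hc hdψ t
    have hK : ∀ x, KtKer φ ψ t x z = ∫ u in Ioi (0:ℝ), φ (x + u) * ψ (z + u) := by
      intro x; unfold KtKer Kker; rw [hchi, mul_one]
    simp_rw [hK, h0, hchi, one_mul]
    have hjoint : Integrable (uncurry fun x u => φ (x + u) * ψ (z + u))
        ((volume : Measure ℝ).prod ((volume : Measure ℝ).restrict (Ioi 0))) := by
      have hmeas : AEStronglyMeasurable (uncurry fun x u => φ (x + u) * ψ (z + u))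
          ((volume : Measure ℝ).prod ((volume : Measure ℝ).restrict (Ioi 0))) := by
        apply Continuous.aestronglyMeasurable
        exact (hφ.comp (continuous_fst.add continuous_snd)).mul
          (hψ.comp (continuous_const.add continuous_snd))
      rw [integrable_prod_iff' hmeas]
      constructor
      · filter_upwards with u
        simp only [uncurry]
        exact (hφ1.comp_add_right u).mul_const _
      · have heq : ∀ u : ℝ, (∫ x, ‖uncurry (fun x u => φ (x + u) * ψ (z + u)) (x, u)‖)
            = (∫ x, |φ x|) * |ψ (z + u)| := by
          intro u
          have : ∀ x : ℝ, ‖uncurry (fun x u => φ (x + u) * ψ (z + u)) (x, u)‖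
              = |φ (x + u)| * |ψ (z + u)| := fun x => by
            simp [uncurry, Real.norm_eq_abs, abs_mul]
          simp_rw [this, integral_mul_const]
          congr 1
          exact integral_add_right_eq_self (fun x => |φ x|) u
        simp_rw [heq]
        refine Integrable.mono ((exp_neg_integrableOn_Ioi 0 hc).const_mul
          ((∫ x, |φ x|) * Mψ * Real.exp (-c * z))) ?_ ?_
        · exact (continuous_const.mul ((hψ.comp
            (continuous_const.add continuous_id)).abs)).aestronglyMeasurable.restrict
        · filter_upwards [ae_restrict_mem measurableSet_Ioi] with u hu
          have h1 := hMψ (z + u) (by nlinarith [le_of_lt (mem_Ioi.1 hu)])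
          have h2 : Real.exp (-c * (z + u)) = Real.exp (-c * z) * Real.exp (-c * u) := by
            rw [← Real.exp_add]; ring_nf
          have hint0 : 0 ≤ ∫ x, |φ x| := integral_nonneg fun x => abs_nonneg _
          rw [Real.norm_eq_abs, Real.norm_eq_abs,
            abs_of_nonneg (mul_nonneg hint0 (abs_nonneg _)),
            abs_of_nonneg (mul_nonneg (mul_nonneg (mul_nonneg hint0 hMψ0)
              (Real.exp_nonneg _)) (Real.exp_nonneg _))]
          calc (∫ x, |φ x|) * |ψ (z + u)| ≤ (∫ x, |φ x|) * (Mψ * Real.exp (-c * (z + u))) :=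
                mul_le_mul_of_nonneg_left h1 hint0
            _ = (∫ x, |φ x|) * Mψ * Real.exp (-c * z) * Real.exp (-c * u) := by rw [h2]; ring
    rw [integral_integral_swap hjoint]
    have hinner : ∀ u : ℝ, (∫ x, φ (x + u) * ψ (z + u)) = (∫ x, φ x) * ψ (z + u) := by
      intro u
      rw [integral_mul_const]
      congr 1
      exact integral_add_right_eq_self φ u
    simp_rw [hinner]
    exact integral_const_mul _ _
  · have hchi : chi t z = 0 := by unfold chi; rw [if_neg hz]
    have hK : ∀ x, KtKer φ ψ t x z = 0 := by
      intro x; unfold KtKer; rw [hchi, mul_zero]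
    simp_rw [hK, h0, hchi, zero_mul, mul_zero, integral_zero]
end Swap

section Pairing
variable {φ ψ : ℝ → ℝ} {c C t y : ℝ}

lemma integrable_of_dom' {μ ν : Measure ℝ} [SFinite μ] [SFinite ν] {f : ℝ → ℝ → ℝ}
    {g h : ℝ → ℝ} (hf : AEStronglyMeasurable (uncurry f) (μ.prod ν))
    (hg : Integrable g μ) (hh : Integrable h ν)
    (hb : ∀ᵐ p ∂(μ.prod ν), |f p.1 p.2| ≤ g p.1 * h p.2) :
    Integrable (uncurry f) (μ.prod ν) := by
  refine (hg.mul_prod hh).mono hf ?_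
  filter_upwards [hb] with p hp
  rw [Real.norm_eq_abs, Real.norm_eq_abs]
  exact hp.trans (le_abs_self _)

lemma ae_prod_mem_snd {μ ν : Measure ℝ} [SFinite μ] [SFinite ν] {s : Set ℝ}
    (hs : MeasurableSet s) : ∀ᵐ p ∂(μ.prod (ν.restrict s)), p.2 ∈ s := by
  have h : μ.prod (ν.restrict s) = (μ.prod ν).restrict (univ ×ˢ s) := by
    rw [← Measure.prod_restrict, Measure.restrict_univ]
  rw [h]
  filter_upwards [ae_restrict_mem (MeasurableSet.univ.prod hs)] with p hp
  exact hp.2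

lemma ae_prod_mem₂ {μ ν : Measure ℝ} [SFinite μ] [SFinite ν] {s u : Set ℝ}
    (hs : MeasurableSet s) (hu : MeasurableSet u) :
    ∀ᵐ p ∂((μ.restrict s).prod (ν.restrict u)), p.1 ∈ s ∧ p.2 ∈ u := by
  rw [Measure.prod_restrict]
  filter_upwards [ae_restrict_mem (hs.prod hu)] with p hp
  exact ⟨hp.1, hp.2⟩

lemma pairing (hφ : Continuous φ) (hψ : Continuous ψ) (hc : 0 < c)
    (hdψ : ∀ x, 0 ≤ x → |ψ x| ≤ C * Real.exp (-c * x)) (hφ1 : Integrable φ)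
    (t y : ℝ) (m j : ℕ) :
    ∫ z, Scseq φ ψ t m z * Sg φ ψ t y (j+1) z
      = ∫ z, Scseq φ ψ t (m+1) z * Sg φ ψ t y j z := by
  obtain ⟨E, hE0, hE⟩ := abs_Scseq_le hφ hψ hc hdψ hφ1 t m
  obtain ⟨MA, hMA0, hMA⟩ := abs_KtKer_le hφ hψ hc hdψ hφ1 t (C := C)
  have hrg := Sg_rg_int hφ hψ hc hdψ hφ1 t y j
  have hjoint : Integrable (uncurry fun z w =>
      Scseq φ ψ t m z * (KtKer φ ψ t z w * Sg φ ψ t y j w))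
      ((volume : Measure ℝ).prod (volume : Measure ℝ)) := by
    have hsm : StronglyMeasurable (fun p : ℝ × ℝ =>
        Scseq φ ψ t m p.1 * (KtKer φ ψ t p.1 p.2 * Sg φ ψ t y j p.2)) :=
      ((sm_Scseq hφ hψ t m).comp_measurable measurable_fst).mul
        ((sm_KtKer hφ hψ t).mul ((sm_Sg hφ hψ t y j).comp_measurable measurable_snd))
    refine integrable_of_dom' hsm.aestronglyMeasurable
      ((integrable_SrhoPhit hφ hφ1 hc t).const_mul (E * MA)) hrg ?_
    filter_upwards with p
    calc |Scseq φ ψ t m p.1 * (KtKer φ ψ t p.1 p.2 * Sg φ ψ t y j p.2)|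
        = |Scseq φ ψ t m p.1| * (|KtKer φ ψ t p.1 p.2| * |Sg φ ψ t y j p.2|) := by
          rw [abs_mul, abs_mul]
      _ ≤ (E * Srho c t p.1) * ((MA * SPhit φ c p.1 * Srho c t p.2) * |Sg φ ψ t y j p.2|) := by
          refine mul_le_mul (hE p.1)
            (mul_le_mul_of_nonneg_right (hMA p.1 p.2) (abs_nonneg _))
            (mul_nonneg (abs_nonneg _) (abs_nonneg _))
            (mul_nonneg hE0 (Srho_nonneg _ _ _))
      _ = (E * MA * (Srho c t p.1 * SPhit φ c p.1)) * (Srho c t p.2 * |Sg φ ψ t y j p.2|) := by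
          ring
  have hgsucc : ∀ z, Sg φ ψ t y (j+1) z = ∫ w, KtKer φ ψ t z w * Sg φ ψ t y j w :=
    fun z => by rw [Sg_succ]
  simp_rw [hgsucc, ← integral_const_mul]
  rw [integral_integral_swap hjoint]
  have hinner : ∀ w, (∫ z, Scseq φ ψ t m z * (KtKer φ ψ t z w * Sg φ ψ t y j w))
      = Scseq φ ψ t (m+1) w * Sg φ ψ t y j w := by
    intro w
    have h1 : ∀ z, Scseq φ ψ t m z * (KtKer φ ψ t z w * Sg φ ψ t y j w)
        = (Scseq φ ψ t m z * KtKer φ ψ t z w) * Sg φ ψ t y j w := fun z => by ring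
    simp_rw [h1, integral_mul_const]
    rfl
  simp_rw [hinner]

lemma pairing_chain (hφ : Continuous φ) (hψ : Continuous ψ) (hc : 0 < c)
    (hdψ : ∀ x, 0 ≤ x → |ψ x| ≤ C * Real.exp (-c * x)) (hφ1 : Integrable φ)
    (t y : ℝ) : ∀ n m : ℕ,
    ∫ z, Scseq φ ψ t m z * Sg φ ψ t y n z = ∫ z, Scseq φ ψ t (m+n) z * Sg φ ψ t y 0 z := by
  intro n
  induction n with
  | zero => intro m; simp
  | succ n ih =>
    intro m
    rw [pairing hφ hψ hc hdψ hφ1 t y m n, ih (m+1)]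
    have h : m + 1 + n = m + (n + 1) := by omega
    rw [h]

lemma kerPow_left (hφ : Continuous φ) (hψ : Continuous ψ) (hc : 0 < c)
    (hdψ : ∀ x, 0 ≤ x → |ψ x| ≤ C * Real.exp (-c * x)) (hφ1 : Integrable φ) (t : ℝ) :
    ∀ m, ∀ x v, kerPow (KtKer φ ψ t) (m+1) x v
      = ∫ w, KtKer φ ψ t x w * kerPow (KtKer φ ψ t) m w v := by
  intro m
  induction m with
  | zero => intro x v; rfl
  | succ m ih =>
    intro x v
    obtain ⟨D, hD0, hD⟩ := abs_kerPow_le hφ hψ hc hdψ hφ1 t (C := C) m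
    obtain ⟨MA, hMA0, hMA⟩ := abs_KtKer_le hφ hψ hc hdψ hφ1 t (C := C)
    have h1 : kerPow (KtKer φ ψ t) (m+2) x v
        = ∫ w, kerPow (KtKer φ ψ t) (m+1) x w * KtKer φ ψ t w v := rfl
    rw [h1]
    simp_rw [fun w => ih x w]
    have hjoint : Integrable (uncurry fun w r =>
        (KtKer φ ψ t x r * kerPow (KtKer φ ψ t) m r w) * KtKer φ ψ t w v)
        ((volume : Measure ℝ).prod (volume : Measure ℝ)) := by
      have hsm : StronglyMeasurable (fun p : ℝ × ℝ =>
          (KtKer φ ψ t x p.2 * kerPow (KtKer φ ψ t) m p.2 p.1) * KtKer φ ψ t p.1 v) :=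
        (((sm_KtKer hφ hψ t).comp_measurable (measurable_const.prodMk measurable_snd)).mul
          ((sm_kerPow hφ hψ t m).comp_measurable (measurable_snd.prodMk measurable_fst))).mul
          ((sm_KtKer hφ hψ t).comp_measurable (measurable_fst.prodMk measurable_const))
      refine integrable_of_dom' hsm.aestronglyMeasurable
        ((integrable_SrhoPhit hφ hφ1 hc t).const_mul (MA * D * MA * SPhit φ c x * Srho c t v))
        (integrable_SrhoPhit hφ hφ1 hc t) ?_
      filter_upwards with p
      calc |(KtKer φ ψ t x p.2 * kerPow (KtKer φ ψ t) m p.2 p.1) * KtKer φ ψ t p.1 v|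
          = |KtKer φ ψ t x p.2| * |kerPow (KtKer φ ψ t) m p.2 p.1| * |KtKer φ ψ t p.1 v| := by
            rw [abs_mul, abs_mul]
        _ ≤ (MA * SPhit φ c x * Srho c t p.2) * (D * SPhit φ c p.2 * Srho c t p.1)
              * (MA * SPhit φ c p.1 * Srho c t v) := by
            refine mul_le_mul (mul_le_mul (hMA x p.2) (hD p.2 p.1) (abs_nonneg _) ?_)
              (hMA p.1 v) (abs_nonneg _) ?_
            all_goals
              first
              | exact mul_nonneg (mul_nonneg hMA0 (SPhit_nonneg _ _ _)) (Srho_nonneg _ _ _)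
              | exact mul_nonneg
                  (mul_nonneg (mul_nonneg hMA0 (SPhit_nonneg _ _ _)) (Srho_nonneg _ _ _))
                  (mul_nonneg (mul_nonneg hD0 (SPhit_nonneg _ _ _)) (Srho_nonneg _ _ _))
        _ = (MA * D * MA * SPhit φ c x * Srho c t v * (Srho c t p.1 * SPhit φ c p.1))
              * (Srho c t p.2 * SPhit φ c p.2) := by ring
    simp_rw [← integral_mul_const]
    rw [integral_integral_swap hjoint]
    have hinner : ∀ r, (∫ w, (KtKer φ ψ t x r * kerPow (KtKer φ ψ t) m r w) * KtKer φ ψ t w v)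
        = KtKer φ ψ t x r * kerPow (KtKer φ ψ t) (m+1) r v := by
      intro r
      have h2 : ∀ w, (KtKer φ ψ t x r * kerPow (KtKer φ ψ t) m r w) * KtKer φ ψ t w v
          = KtKer φ ψ t x r * (kerPow (KtKer φ ψ t) m r w * KtKer φ ψ t w v) := fun w => by ring
      simp_rw [h2, integral_const_mul]
      rfl
    simp_rw [hinner]

end Pairing

section Main
variable {φ ψ : ℝ → ℝ} {c C t y : ℝ}

lemma exp_split (c a b : ℝ) :
    Real.exp (-c * (a + b)) = Real.exp (-c * a) * Real.exp (-c * b) := by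
  rw [← Real.exp_add]; ring_nf

lemma Srho_le_exp (c t z : ℝ) : Srho c t z ≤ Real.exp (-c * z) := by
  unfold Srho
  exact mul_le_of_le_one_left (Real.exp_nonneg _) (chi_le_one t z)

set_option maxHeartbeats 1000000 in
lemma cseq_phi (hφ : Continuous φ) (hψ : Continuous ψ) (hc : 0 < c)
    (hdφ : ∀ x, 0 ≤ x → |φ x| ≤ C * Real.exp (-c * x))
    (hdψ : ∀ x, 0 ≤ x → |ψ x| ≤ C * Real.exp (-c * x)) (hφ1 : Integrable φ) (t : ℝ) :
    ∀ m, ∀ y' : ℝ, ∫ z, Scseq φ ψ t m z * φ (z + y')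
      = ∫ u in Ioi (0:ℝ), kerPow (KtKer φ ψ t) m (y' + t) (u + t) := by
  intro m
  induction m with
  | zero =>
    intro y'
    obtain ⟨Mψ, hMψ0, hMψ⟩ := exists_decay hψ hc hdψ t
    obtain ⟨Mφ', hMφ0, hMφ⟩ := exists_decay hφ hc hdφ (y' + t)
    have h1 : ∀ z, Scseq φ ψ t 0 z * φ (z + y')
        = chi t z * ((∫ u in Ioi (0:ℝ), ψ (z + u)) * φ (z + y')) := by
      intro z
      show (chi t z * _) * _ = _
      ring
    simp_rw [h1]
    rw [integral_chi_mul t (fun z => (∫ u in Ioi (0:ℝ), ψ (z + u)) * φ (z + y'))]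
    simp_rw [← integral_mul_const]
    have hjointR : Integrable (uncurry fun u s => φ (y' + t + s) * ψ (u + t + s))
        (((volume : Measure ℝ).restrict (Ioi 0)).prod
          ((volume : Measure ℝ).restrict (Ioi 0))) := by
      refine integrable_of_dom'
        (Continuous.aestronglyMeasurable ((hφ.comp (continuous_const.add continuous_snd)).mul
          (hψ.comp ((continuous_fst.add continuous_const).add continuous_snd))))
        ((exp_neg_integrableOn_Ioi 0 hc).const_mul (Mψ * Real.exp (-c * t)))
        ((exp_neg_integrableOn_Ioi 0 hc).const_mul (Mφ' * Real.exp (-c * (y' + t)))) ?_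
      filter_upwards [ae_prod_mem₂ measurableSet_Ioi measurableSet_Ioi] with p hp
      obtain ⟨hp1, hp2⟩ := hp
      have hb1 : |φ (y' + t + p.2)| ≤ Mφ' * Real.exp (-c * (y' + t)) * Real.exp (-c * p.2) := by
        have := hMφ (y' + t + p.2) (by linarith [mem_Ioi.1 hp2])
        rwa [show (-c) * (y' + t + p.2) = (-c) * ((y' + t) + p.2) by ring,
          exp_split c (y' + t) p.2, ← mul_assoc] at this
      have hb2 : |ψ (p.1 + t + p.2)| ≤ Mψ * Real.exp (-c * t) * Real.exp (-c * p.1) := by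
        have h := hMψ (p.1 + t + p.2) (by nlinarith [mem_Ioi.1 hp1, mem_Ioi.1 hp2])
        have h2 : Real.exp (-c * (p.1 + t + p.2))
            = Real.exp (-c * t) * Real.exp (-c * p.1) * Real.exp (-c * p.2) := by
          rw [← Real.exp_add, ← Real.exp_add]; ring_nf
        calc |ψ (p.1 + t + p.2)| ≤ Mψ * Real.exp (-c * (p.1 + t + p.2)) := h
          _ = Mψ * Real.exp (-c * t) * Real.exp (-c * p.1) * Real.exp (-c * p.2) := by
              rw [h2]; ring
          _ ≤ Mψ * Real.exp (-c * t) * Real.exp (-c * p.1) * 1 := by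
              refine mul_le_mul_of_nonneg_left ?_ (by positivity)
              exact Real.exp_le_one_iff.2 (by nlinarith [le_of_lt (mem_Ioi.1 hp2)])
          _ = Mψ * Real.exp (-c * t) * Real.exp (-c * p.1) := by ring
      calc |φ (y' + t + p.2) * ψ (p.1 + t + p.2)|
          = |φ (y' + t + p.2)| * |ψ (p.1 + t + p.2)| := abs_mul _ _
        _ ≤ (Mφ' * Real.exp (-c * (y' + t)) * Real.exp (-c * p.2))
              * (Mψ * Real.exp (-c * t) * Real.exp (-c * p.1)) :=
            mul_le_mul hb1 hb2 (abs_nonneg _) (by positivity)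
        _ = (Mψ * Real.exp (-c * t) * Real.exp (-c * p.1))
              * (Mφ' * Real.exp (-c * (y' + t)) * Real.exp (-c * p.2)) := by ring
    have hR : EqOn (fun u => kerPow (KtKer φ ψ t) 0 (y' + t) (u + t))
        (fun u => ∫ s in Ioi (0:ℝ), φ (y' + t + s) * ψ (u + t + s)) (Ioi 0) := by
      intro u hu
      show KtKer φ ψ t (y' + t) (u + t) = _
      unfold KtKer chi
      rw [if_pos (by linarith [mem_Ioi.1 hu] : t ≤ u + t), mul_one]
      rfl
    rw [setIntegral_congr_fun measurableSet_Ioi hR, integral_integral_swap hjointR]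
    refine setIntegral_congr_fun measurableSet_Ioi fun p hp => ?_
    refine setIntegral_congr_fun measurableSet_Ioi fun u hu => ?_
    rw [show p + t + u = u + t + p by ring, show p + t + y' = y' + t + p by ring, mul_comm]
  | succ m ih =>
    intro y'
    obtain ⟨E, hE0, hE⟩ := abs_Scseq_le hφ hψ hc hdψ hφ1 t m
    obtain ⟨MA, hMA0, hMA⟩ := abs_KtKer_le hφ hψ hc hdψ hφ1 t (C := C)
    obtain ⟨D, hD0, hD⟩ := abs_kerPow_le hφ hψ hc hdψ hφ1 t (C := C) m
    obtain ⟨Mψ, hMψ0, hMψ⟩ := exists_decay hψ hc hdψ t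
    obtain ⟨Mφ', hMφ0, hMφ⟩ := exists_decay hφ hc hdφ (y' + t)
    set Iφ := ∫ x, |φ x| with hIφdef
    have hIφ0 : 0 ≤ Iφ := integral_nonneg fun x => abs_nonneg _
    set Cm : ℝ → ℝ := fun s => ∫ z, Scseq φ ψ t m z * φ (z + s) with hCm
    have hCmb : ∀ s, |Cm s| ≤ E * Real.exp (-c * t) * Iφ := by
      intro s
      have habs : |Cm s| ≤ ∫ z, ‖Scseq φ ψ t m z * φ (z + s)‖ := by
        rw [hCm, ← Real.norm_eq_abs]; exact norm_integral_le_integral_norm _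
      refine habs.trans ?_
      calc ∫ z, ‖Scseq φ ψ t m z * φ (z + s)‖
          ≤ ∫ z, (E * Real.exp (-c * t)) * |φ (z + s)| := by
            apply integral_mono_of_nonneg
            · filter_upwards with z; positivity
            · exact (hφ1.abs.comp_add_right s).const_mul _
            · filter_upwards with z
              rw [Real.norm_eq_abs, abs_mul]
              calc |Scseq φ ψ t m z| * |φ (z + s)| ≤ (E * Srho c t z) * |φ (z + s)| :=
                    mul_le_mul_of_nonneg_right (hE z) (abs_nonneg _)
                _ ≤ (E * Real.exp (-c * t)) * |φ (z + s)| :=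
                    mul_le_mul_of_nonneg_right
                      (mul_le_mul_of_nonneg_left (Srho_le c t hc z) hE0) (abs_nonneg _)
        _ = (E * Real.exp (-c * t)) * ∫ z, |φ (z + s)| := integral_const_mul _ _
        _ = E * Real.exp (-c * t) * Iφ := by
            rw [hIφdef]
            congr 1
            exact integral_add_right_eq_self (fun x => |φ x|) s
    have hCmsm : StronglyMeasurable Cm := by
      rw [hCm]
      have hsm : StronglyMeasurable (fun q : ℝ × ℝ => Scseq φ ψ t m q.2 * φ (q.2 + q.1)) :=
        ((sm_Scseq hφ hψ t m).comp_measurable measurable_snd).mul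
          ((hφ.comp (continuous_snd.add continuous_fst)).stronglyMeasurable)
      exact hsm.integral_prod_right'
    -- Step 1
    have hS1 : Integrable (uncurry fun z w =>
        (Scseq φ ψ t m w * KtKer φ ψ t w z) * φ (z + y'))
        ((volume : Measure ℝ).prod (volume : Measure ℝ)) := by
      have hsm : StronglyMeasurable (fun p : ℝ × ℝ =>
          (Scseq φ ψ t m p.2 * KtKer φ ψ t p.2 p.1) * φ (p.1 + y')) :=
        (((sm_Scseq hφ hψ t m).comp_measurable measurable_snd).mul
          ((sm_KtKer hφ hψ t).comp_measurable (measurable_snd.prodMk measurable_fst))).mul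
          ((hφ.comp (continuous_fst.add continuous_const)).stronglyMeasurable)
      refine integrable_of_dom' hsm.aestronglyMeasurable
        (Sg_rg_int hφ hψ hc hdψ hφ1 t y' 0)
        ((integrable_SrhoPhit hφ hφ1 hc t).const_mul (E * MA)) ?_
      filter_upwards with p
      calc |(Scseq φ ψ t m p.2 * KtKer φ ψ t p.2 p.1) * φ (p.1 + y')|
          = |Scseq φ ψ t m p.2| * |KtKer φ ψ t p.2 p.1| * |φ (p.1 + y')| := by
            rw [abs_mul, abs_mul]
        _ ≤ (E * Srho c t p.2) * (MA * SPhit φ c p.2 * Srho c t p.1) * |φ (p.1 + y')| := by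
            refine mul_le_mul_of_nonneg_right
              (mul_le_mul (hE p.2) (hMA p.2 p.1) (abs_nonneg _)
                (mul_nonneg hE0 (Srho_nonneg _ _ _))) (abs_nonneg _)
        _ = (Srho c t p.1 * |Sg φ ψ t y' 0 p.1|)
              * (E * MA * (Srho c t p.2 * SPhit φ c p.2)) := by
            show _ = Srho c t p.1 * |φ (p.1 + y')| * _
            ring
    have step1 : ∫ z, Scseq φ ψ t (m+1) z * φ (z + y')
        = ∫ w, Scseq φ ψ t m w * (∫ z, KtKer φ ψ t w z * φ (z + y')) := by
      have h0 : ∀ z, Scseq φ ψ t (m+1) z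
          = ∫ w, Scseq φ ψ t m w * KtKer φ ψ t w z := fun z => rfl
      simp_rw [h0, ← integral_mul_const]
      rw [integral_integral_swap hS1]
      simp_rw [mul_assoc, integral_const_mul]
    -- Step 2
    have step2 : ∀ w, (∫ z, KtKer φ ψ t w z * φ (z + y'))
        = ∫ p in Ioi (0:ℝ), ∫ s in Ioi (0:ℝ),
            (φ (w + s) * ψ (p + t + s)) * φ (p + t + y') := by
      intro w
      have h1 : ∀ z, KtKer φ ψ t w z * φ (z + y')
          = chi t z * (Kker φ ψ w z * φ (z + y')) := fun z => by unfold KtKer; ring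
      simp_rw [h1]
      rw [integral_chi_mul t (fun z => Kker φ ψ w z * φ (z + y'))]
      have h2 : ∀ p : ℝ, Kker φ ψ w (p + t)
          = ∫ s in Ioi (0:ℝ), φ (w + s) * ψ (p + t + s) := fun p => rfl
      simp_rw [h2, ← integral_mul_const]
    -- Step 3
    have hS2 : Integrable (uncurry fun w p => ∫ s in Ioi (0:ℝ),
        Scseq φ ψ t m w * ((φ (w + s) * ψ (p + t + s)) * φ (p + t + y')))
        ((volume : Measure ℝ).prod ((volume : Measure ℝ).restrict (Ioi 0))) := by
      have hcontG : Continuous (fun r : (ℝ × ℝ) × ℝ =>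
          (φ (r.1.1 + r.2) * ψ (r.1.2 + t + r.2)) * φ (r.1.2 + t + y')) := by fun_prop
      have hsmG : StronglyMeasurable (fun r : (ℝ × ℝ) × ℝ =>
          Scseq φ ψ t m r.1.1 * ((φ (r.1.1 + r.2) * ψ (r.1.2 + t + r.2)) * φ (r.1.2 + t + y'))) :=
        ((sm_Scseq hφ hψ t m).comp_measurable measurable_fst.fst).mul
          hcontG.stronglyMeasurable
      have hdom : Integrable (fun p : ℝ => Real.exp (-c * (p + t)) * |φ (p + t + y')|)
          ((volume : Measure ℝ).restrict (Ioi 0)) := by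
        have hcontD : Continuous (fun p : ℝ => Real.exp (-c * (p + t)) * |φ (p + t + y')|) := by
          fun_prop
        refine Integrable.mono ((exp_neg_integrableOn_Ioi 0 hc).const_mul
          (Real.exp (-c * t) * (Mφ' * Real.exp (-c * (t + y'))))) hcontD.aestronglyMeasurable.restrict ?_
        filter_upwards [ae_restrict_mem measurableSet_Ioi] with p hp
        have hb : |φ (p + t + y')| ≤ Mφ' * Real.exp (-c * (t + y')) := by
          have h := hMφ (p + t + y') (by linarith [mem_Ioi.1 hp])
          refine h.trans ?_
          refine mul_le_mul_of_nonneg_left ?_ hMφ0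
          exact Real.exp_le_exp.2 (by nlinarith [le_of_lt (mem_Ioi.1 hp)])
        have e1 : ‖Real.exp (-c * (p + t)) * |φ (p + t + y')|‖
            = Real.exp (-c * (p + t)) * |φ (p + t + y')| :=
          abs_of_nonneg (mul_nonneg (Real.exp_nonneg _) (abs_nonneg _))
        have e2 : ‖Real.exp (-c * t) * (Mφ' * Real.exp (-c * (t + y'))) * Real.exp (-c * p)‖
            = Real.exp (-c * t) * (Mφ' * Real.exp (-c * (t + y'))) * Real.exp (-c * p) :=
          abs_of_nonneg (mul_nonneg (mul_nonneg (Real.exp_nonneg _)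
            (mul_nonneg hMφ0 (Real.exp_nonneg _))) (Real.exp_nonneg _))
        rw [e1, e2]
        calc Real.exp (-c * (p + t)) * |φ (p + t + y')|
            ≤ Real.exp (-c * (p + t)) * (Mφ' * Real.exp (-c * (t + y'))) :=
              mul_le_mul_of_nonneg_left hb (Real.exp_nonneg _)
          _ = Real.exp (-c * t) * (Mφ' * Real.exp (-c * (t + y'))) * Real.exp (-c * p) := by
              rw [show (p:ℝ) + t = t + p by ring, exp_split c t p]; ring
      refine integrable_of_dom' hsmG.integral_prod_right'.aestronglyMeasurable
        ((integrable_SrhoPhit hφ hφ1 hc t).const_mul (E * Mψ)) hdom ?_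
      filter_upwards [ae_prod_mem_snd measurableSet_Ioi] with q hq
      have hin : |∫ s in Ioi (0:ℝ),
          Scseq φ ψ t m q.1 * ((φ (q.1 + s) * ψ (q.2 + t + s)) * φ (q.2 + t + y'))|
          ≤ ∫ s in Ioi (0:ℝ),
            (E * Srho c t q.1 * (Mψ * Real.exp (-c * (q.2 + t))) * |φ (q.2 + t + y')|)
              * (|φ (q.1 + s)| * Real.exp (-c * s)) := by
        rw [← Real.norm_eq_abs]
        refine (norm_integral_le_integral_norm _).trans ?_
        apply integral_mono_of_nonneg
        · filter_upwards with s; positivity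
        · exact (integrableOn_phiexp hφ hφ1 hc q.1).const_mul _
        · filter_upwards [ae_restrict_mem measurableSet_Ioi] with s hs
          rw [Real.norm_eq_abs, abs_mul, abs_mul, abs_mul]
          have hψb : |ψ (q.2 + t + s)|
              ≤ Mψ * Real.exp (-c * (q.2 + t)) * Real.exp (-c * s) := by
            have h := hMψ (q.2 + t + s) (by nlinarith [mem_Ioi.1 hq, mem_Ioi.1 hs])
            rwa [show (-c) * (q.2 + t + s) = (-c) * ((q.2 + t) + s) by ring,
              exp_split c (q.2 + t) s, ← mul_assoc] at h
          calc |Scseq φ ψ t m q.1| * (|φ (q.1 + s)| * |ψ (q.2 + t + s)| * |φ (q.2 + t + y')|)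
              ≤ (E * Srho c t q.1) * (|φ (q.1 + s)|
                  * (Mψ * Real.exp (-c * (q.2 + t)) * Real.exp (-c * s)) * |φ (q.2 + t + y')|) := by
                refine mul_le_mul (hE q.1) ?_ (by positivity) (mul_nonneg hE0 (Srho_nonneg _ _ _))
                refine mul_le_mul_of_nonneg_right
                  (mul_le_mul_of_nonneg_left hψb (abs_nonneg _)) (abs_nonneg _)
            _ = (E * Srho c t q.1 * (Mψ * Real.exp (-c * (q.2 + t))) * |φ (q.2 + t + y')|)
                  * (|φ (q.1 + s)| * Real.exp (-c * s)) := by ring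
      refine hin.trans ?_
      rw [integral_const_mul]
      have hphit : (∫ s in Ioi (0:ℝ), |φ (q.1 + s)| * Real.exp (-c * s)) = SPhit φ c q.1 := rfl
      rw [hphit]
      have : E * Srho c t q.1 * (Mψ * Real.exp (-c * (q.2 + t))) * |φ (q.2 + t + y')| * SPhit φ c q.1
          = (E * Mψ * (Srho c t q.1 * SPhit φ c q.1))
            * (Real.exp (-c * (q.2 + t)) * |φ (q.2 + t + y')|) := by ring
      rw [this]
    have hS3 : ∀ p ∈ Ioi (0:ℝ), Integrable (uncurry fun w s =>
        Scseq φ ψ t m w * ((φ (w + s) * ψ (p + t + s)) * φ (p + t + y')))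
        ((volume : Measure ℝ).prod ((volume : Measure ℝ).restrict (Ioi 0))) := by
      intro p hp
      have hcont3 : Continuous (fun q : ℝ × ℝ =>
          (φ (q.1 + q.2) * ψ (p + t + q.2)) * φ (p + t + y')) := by fun_prop
      have hsm : StronglyMeasurable (fun q : ℝ × ℝ =>
          Scseq φ ψ t m q.1 * ((φ (q.1 + q.2) * ψ (p + t + q.2)) * φ (p + t + y'))) :=
        ((sm_Scseq hφ hψ t m).comp_measurable measurable_fst).mul hcont3.stronglyMeasurable
      refine Integrable.mono ((phiexp_prod_integrable hφ hφ1 hc).const_mul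
        (E * Real.exp (-c * t) * (Mψ * Real.exp (-c * (p + t))) * |φ (p + t + y')|))
        hsm.aestronglyMeasurable ?_
      filter_upwards [ae_prod_mem_snd measurableSet_Ioi] with q hq
      have hψb : |ψ (p + t + q.2)| ≤ Mψ * Real.exp (-c * (p + t)) * Real.exp (-c * q.2) := by
        have h := hMψ (p + t + q.2) (by nlinarith [mem_Ioi.1 hp, mem_Ioi.1 hq])
        rwa [show (-c) * (p + t + q.2) = (-c) * ((p + t) + q.2) by ring,
          exp_split c (p + t) q.2, ← mul_assoc] at h
      rw [Real.norm_eq_abs, Real.norm_eq_abs]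
      have hrhs : |E * Real.exp (-c * t) * (Mψ * Real.exp (-c * (p + t))) * |φ (p + t + y')|
          * (|φ (q.1 + q.2)| * Real.exp (-c * q.2))|
          = E * Real.exp (-c * t) * (Mψ * Real.exp (-c * (p + t))) * |φ (p + t + y')|
            * (|φ (q.1 + q.2)| * Real.exp (-c * q.2)) := by
        apply abs_of_nonneg; positivity
      rw [hrhs]
      calc |Scseq φ ψ t m q.1 * ((φ (q.1 + q.2) * ψ (p + t + q.2)) * φ (p + t + y'))|
          = |Scseq φ ψ t m q.1| * (|φ (q.1 + q.2)| * |ψ (p + t + q.2)| * |φ (p + t + y')|) := by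
            rw [abs_mul, abs_mul, abs_mul]
        _ ≤ (E * Real.exp (-c * t)) * (|φ (q.1 + q.2)|
              * (Mψ * Real.exp (-c * (p + t)) * Real.exp (-c * q.2)) * |φ (p + t + y')|) := by
            refine mul_le_mul ((hE q.1).trans
              (mul_le_mul_of_nonneg_left (Srho_le c t hc q.1) hE0)) ?_ (by positivity)
              (by positivity)
            exact mul_le_mul_of_nonneg_right
              (mul_le_mul_of_nonneg_left hψb (abs_nonneg _)) (abs_nonneg _)
        _ = E * Real.exp (-c * t) * (Mψ * Real.exp (-c * (p + t))) * |φ (p + t + y')|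
              * (|φ (q.1 + q.2)| * Real.exp (-c * q.2)) := by ring
    have step3 : ∫ w, Scseq φ ψ t m w * (∫ p in Ioi (0:ℝ), ∫ s in Ioi (0:ℝ),
          (φ (w + s) * ψ (p + t + s)) * φ (p + t + y'))
        = ∫ p in Ioi (0:ℝ), ∫ s in Ioi (0:ℝ), Cm s * (ψ (p + t + s) * φ (p + t + y')) := by
      simp_rw [← integral_const_mul]
      rw [integral_integral_swap hS2]
      refine setIntegral_congr_fun measurableSet_Ioi fun p hp => ?_
      rw [integral_integral_swap (hS3 p hp)]
      refine setIntegral_congr_fun measurableSet_Ioi fun s hs => ?_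
      have h3 : ∀ w, Scseq φ ψ t m w * ((φ (w + s) * ψ (p + t + s)) * φ (p + t + y'))
          = (Scseq φ ψ t m w * φ (w + s)) * (ψ (p + t + s) * φ (p + t + y')) := fun w => by ring
      simp_rw [h3, integral_mul_const]
      rfl
    -- Step 4
    have hS4 : Integrable (uncurry fun u w =>
        KtKer φ ψ t (y' + t) w * kerPow (KtKer φ ψ t) m w (u + t))
        (((volume : Measure ℝ).restrict (Ioi 0)).prod (volume : Measure ℝ)) := by
      have hsm : StronglyMeasurable (fun p : ℝ × ℝ =>
          KtKer φ ψ t (y' + t) p.2 * kerPow (KtKer φ ψ t) m p.2 (p.1 + t)) :=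
        ((sm_KtKer hφ hψ t).comp_measurable (measurable_const.prodMk measurable_snd)).mul
          ((sm_kerPow hφ hψ t m).comp_measurable
            (measurable_snd.prodMk (measurable_fst.add_const t)))
      refine integrable_of_dom' hsm.aestronglyMeasurable
        ((exp_neg_integrableOn_Ioi 0 hc).const_mul
          (MA * SPhit φ c (y' + t) * D * Real.exp (-c * t)))
        (integrable_SrhoPhit hφ hφ1 hc t) ?_
      filter_upwards with p
      calc |KtKer φ ψ t (y' + t) p.2 * kerPow (KtKer φ ψ t) m p.2 (p.1 + t)|
          = |KtKer φ ψ t (y' + t) p.2| * |kerPow (KtKer φ ψ t) m p.2 (p.1 + t)| := abs_mul _ _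
        _ ≤ (MA * SPhit φ c (y' + t) * Srho c t p.2)
              * (D * SPhit φ c p.2 * Srho c t (p.1 + t)) :=
            mul_le_mul (hMA _ _) (hD _ _) (abs_nonneg _)
              (mul_nonneg (mul_nonneg hMA0 (SPhit_nonneg _ _ _)) (Srho_nonneg _ _ _))
        _ ≤ (MA * SPhit φ c (y' + t) * Srho c t p.2)
              * (D * SPhit φ c p.2 * (Real.exp (-c * t) * Real.exp (-c * p.1))) := by
            refine mul_le_mul_of_nonneg_left ?_
              (mul_nonneg (mul_nonneg hMA0 (SPhit_nonneg _ _ _)) (Srho_nonneg _ _ _))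
            refine mul_le_mul_of_nonneg_left ?_ (mul_nonneg hD0 (SPhit_nonneg _ _ _))
            calc Srho c t (p.1 + t) ≤ Real.exp (-c * (p.1 + t)) := Srho_le_exp c t _
              _ = Real.exp (-c * t) * Real.exp (-c * p.1) := by
                  rw [show (-c) * (p.1 + t) = (-c) * (t + p.1) by ring, exp_split c t p.1]
        _ = (MA * SPhit φ c (y' + t) * D * Real.exp (-c * t) * Real.exp (-c * p.1))
              * (Srho c t p.2 * SPhit φ c p.2) := by ring
    have step4 : ∫ u in Ioi (0:ℝ), kerPow (KtKer φ ψ t) (m+1) (y' + t) (u + t)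
        = ∫ w, KtKer φ ψ t (y' + t) w * Cm (w - t) := by
      simp_rw [kerPow_left hφ hψ hc hdψ hφ1 t m (y' + t)]
      rw [integral_integral_swap hS4]
      simp_rw [integral_const_mul]
      refine integral_congr_ae (Filter.Eventually.of_forall fun w => ?_)
      show KtKer φ ψ t (y' + t) w * (∫ u in Ioi (0:ℝ), kerPow (KtKer φ ψ t) m w (u + t))
          = KtKer φ ψ t (y' + t) w * Cm (w - t)
      have h := ih (w - t)
      rw [sub_add_cancel] at h
      rw [← h, hCm]
    -- Step 5
    have step5 : ∫ w, KtKer φ ψ t (y' + t) w * Cm (w - t)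
        = ∫ p in Ioi (0:ℝ), ∫ s in Ioi (0:ℝ), (φ (y' + t + s) * ψ (p + t + s)) * Cm p := by
      have h1 : ∀ w, KtKer φ ψ t (y' + t) w * Cm (w - t)
          = chi t w * (Kker φ ψ (y' + t) w * Cm (w - t)) := fun w => by unfold KtKer; ring
      simp_rw [h1]
      rw [integral_chi_mul t (fun w => Kker φ ψ (y' + t) w * Cm (w - t))]
      simp_rw [add_sub_cancel_right]
      have h2 : ∀ p : ℝ, Kker φ ψ (y' + t) (p + t)
          = ∫ s in Ioi (0:ℝ), φ (y' + t + s) * ψ (p + t + s) := fun p => rfl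
      simp_rw [h2, ← integral_mul_const]
    -- Step 6
    have hS5 : Integrable (uncurry fun p s => (φ (y' + t + s) * ψ (p + t + s)) * Cm p)
        (((volume : Measure ℝ).restrict (Ioi 0)).prod
          ((volume : Measure ℝ).restrict (Ioi 0))) := by
      have hcont5 : Continuous (fun q : ℝ × ℝ =>
          φ (y' + t + q.2) * ψ (q.1 + t + q.2)) := by fun_prop
      have hsm : StronglyMeasurable (fun q : ℝ × ℝ =>
          (φ (y' + t + q.2) * ψ (q.1 + t + q.2)) * Cm q.1) :=
        (hcont5.stronglyMeasurable).mul (hCmsm.comp_measurable measurable_fst)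
      refine integrable_of_dom' hsm.aestronglyMeasurable
        ((exp_neg_integrableOn_Ioi 0 hc).const_mul
          ((E * Real.exp (-c * t) * Iφ) * (Mψ * Real.exp (-c * t))))
        ((exp_neg_integrableOn_Ioi 0 hc).const_mul (Mφ' * Real.exp (-c * (y' + t)))) ?_
      filter_upwards [ae_prod_mem₂ measurableSet_Ioi measurableSet_Ioi] with p hp
      obtain ⟨hp1, hp2⟩ := hp
      have hb1 : |φ (y' + t + p.2)| ≤ Mφ' * Real.exp (-c * (y' + t)) * Real.exp (-c * p.2) := by
        have h := hMφ (y' + t + p.2) (by linarith [mem_Ioi.1 hp2])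
        rwa [show (-c) * (y' + t + p.2) = (-c) * ((y' + t) + p.2) by ring,
          exp_split c (y' + t) p.2, ← mul_assoc] at h
      have hb2 : |ψ (p.1 + t + p.2)| ≤ Mψ * Real.exp (-c * t) * Real.exp (-c * p.1) := by
        have h := hMψ (p.1 + t + p.2) (by nlinarith [mem_Ioi.1 hp1, mem_Ioi.1 hp2])
        have h2 : Real.exp (-c * (p.1 + t + p.2))
            = Real.exp (-c * t) * Real.exp (-c * p.1) * Real.exp (-c * p.2) := by
          rw [← Real.exp_add, ← Real.exp_add]; ring_nf
        calc |ψ (p.1 + t + p.2)| ≤ Mψ * Real.exp (-c * (p.1 + t + p.2)) := h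
          _ = Mψ * Real.exp (-c * t) * Real.exp (-c * p.1) * Real.exp (-c * p.2) := by
              rw [h2]; ring
          _ ≤ Mψ * Real.exp (-c * t) * Real.exp (-c * p.1) * 1 := by
              refine mul_le_mul_of_nonneg_left ?_ (by positivity)
              exact Real.exp_le_one_iff.2 (by nlinarith [le_of_lt (mem_Ioi.1 hp2)])
          _ = Mψ * Real.exp (-c * t) * Real.exp (-c * p.1) := by ring
      calc |(φ (y' + t + p.2) * ψ (p.1 + t + p.2)) * Cm p.1|
          = |φ (y' + t + p.2)| * |ψ (p.1 + t + p.2)| * |Cm p.1| := by rw [abs_mul, abs_mul]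
        _ ≤ (Mφ' * Real.exp (-c * (y' + t)) * Real.exp (-c * p.2))
              * (Mψ * Real.exp (-c * t) * Real.exp (-c * p.1))
              * (E * Real.exp (-c * t) * Iφ) := by
            refine mul_le_mul (mul_le_mul hb1 hb2 (abs_nonneg _) (by positivity))
              (hCmb p.1) (abs_nonneg _) (by positivity)
        _ = ((E * Real.exp (-c * t) * Iφ) * (Mψ * Real.exp (-c * t)) * Real.exp (-c * p.1))
              * (Mφ' * Real.exp (-c * (y' + t)) * Real.exp (-c * p.2)) := by ring
    have step6 : ∫ p in Ioi (0:ℝ), ∫ s in Ioi (0:ℝ), (φ (y' + t + s) * ψ (p + t + s)) * Cm p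
        = ∫ p in Ioi (0:ℝ), ∫ s in Ioi (0:ℝ), Cm s * (ψ (p + t + s) * φ (p + t + y')) := by
      rw [integral_integral_swap hS5]
      refine setIntegral_congr_fun measurableSet_Ioi fun a ha => ?_
      refine setIntegral_congr_fun measurableSet_Ioi fun b hb => ?_
      rw [show b + t + a = a + t + b by ring, show y' + t + a = a + t + y' by ring]
      ring
    calc ∫ z, Scseq φ ψ t (m+1) z * φ (z + y')
        = ∫ w, Scseq φ ψ t m w * (∫ z, KtKer φ ψ t w z * φ (z + y')) := step1
      _ = ∫ w, Scseq φ ψ t m w * (∫ p in Ioi (0:ℝ), ∫ s in Ioi (0:ℝ),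
            (φ (w + s) * ψ (p + t + s)) * φ (p + t + y')) := by simp_rw [step2]
      _ = ∫ p in Ioi (0:ℝ), ∫ s in Ioi (0:ℝ), Cm s * (ψ (p + t + s) * φ (p + t + y')) := step3
      _ = ∫ p in Ioi (0:ℝ), ∫ s in Ioi (0:ℝ), (φ (y' + t + s) * ψ (p + t + s)) * Cm p :=
          step6.symm
      _ = ∫ w, KtKer φ ψ t (y' + t) w * Cm (w - t) := step5.symm
      _ = ∫ u in Ioi (0:ℝ), kerPow (KtKer φ ψ t) (m+1) (y' + t) (u + t) := step4.symm

end Main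

/-- For continuous `φ, ψ` decaying exponentially at `+∞` with `φ ∈ L¹(ℝ)`,
for every `y, t ∈ ℝ` and `k ≥ 1`:
`∫_ℝ ((Kχ_t)^k φ_y)(x) dx = (∫_ℝ φ) · ∫_0^∞ (Kχ_t)^k(y+t, u+t) du`,
where `φ_y(x) = φ(x+y)`. -/
theorem stmt9 (φ ψ : ℝ → ℝ) (hφ : Continuous φ) (hψ : Continuous ψ)
    (hdecay : ∃ c > (0:ℝ), ∃ C : ℝ, ∀ x : ℝ, 0 ≤ x →
      |φ x| ≤ C * Real.exp (-c * x) ∧ |ψ x| ≤ C * Real.exp (-c * x))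
    (hφ1 : Integrable φ) (y t : ℝ) (k : ℕ) (hk : 1 ≤ k) :
    (∫ x : ℝ, (opApply (KtKer φ ψ t))^[k] (fun z => φ (z + y)) x)
      = (∫ x : ℝ, φ x) *
          ∫ u in Ioi (0:ℝ), kerPow (KtKer φ ψ t) (k - 1) (y + t) (u + t) := by
  obtain ⟨c, hc, C, hdec⟩ := hdecay
  have hdφ : ∀ x, 0 ≤ x → |φ x| ≤ C * Real.exp (-c * x) := fun x hx => (hdec x hx).1
  have hdψ : ∀ x, 0 ≤ x → |ψ x| ≤ C * Real.exp (-c * x) := fun x hx => (hdec x hx).2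
  obtain ⟨n, rfl⟩ : ∃ n, k = n + 1 := ⟨k - 1, by omega⟩
  obtain ⟨MA, hMA0, hMA⟩ := abs_KtKer_le hφ hψ hc hdψ hφ1 t (C := C)
  have hF0 : Integrable (uncurry fun x z => KtKer φ ψ t x z * Sg φ ψ t y n z)
      ((volume : Measure ℝ).prod (volume : Measure ℝ)) := by
    have hsm : StronglyMeasurable (fun p : ℝ × ℝ => KtKer φ ψ t p.1 p.2 * Sg φ ψ t y n p.2) :=
      (sm_KtKer hφ hψ t).mul ((sm_Sg hφ hψ t y n).comp_measurable measurable_snd)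
    refine integrable_of_dom' hsm.aestronglyMeasurable
      ((integrable_SPhit hφ hφ1 hc).const_mul MA)
      (Sg_rg_int hφ hψ hc hdψ hφ1 t y n) ?_
    filter_upwards with p
    calc |KtKer φ ψ t p.1 p.2 * Sg φ ψ t y n p.2|
        = |KtKer φ ψ t p.1 p.2| * |Sg φ ψ t y n p.2| := abs_mul _ _
      _ ≤ (MA * SPhit φ c p.1 * Srho c t p.2) * |Sg φ ψ t y n p.2| :=
          mul_le_mul_of_nonneg_right (hMA p.1 p.2) (abs_nonneg _)
      _ = (MA * SPhit φ c p.1) * (Srho c t p.2 * |Sg φ ψ t y n p.2|) := by ring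
  have hgsucc : ∀ x, Sg φ ψ t y (n+1) x = ∫ z, KtKer φ ψ t x z * Sg φ ψ t y n z :=
    fun x => by rw [Sg_succ]
  show ∫ x, Sg φ ψ t y (n+1) x
      = (∫ x : ℝ, φ x) * ∫ u in Ioi (0:ℝ), kerPow (KtKer φ ψ t) (n + 1 - 1) (y + t) (u + t)
  rw [show n + 1 - 1 = n from rfl]
  calc ∫ x, Sg φ ψ t y (n+1) x
      = ∫ x, ∫ z, KtKer φ ψ t x z * Sg φ ψ t y n z := by simp_rw [hgsucc]
    _ = ∫ z, ∫ x, KtKer φ ψ t x z * Sg φ ψ t y n z := integral_integral_swap hF0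
    _ = ∫ z, (∫ x, KtKer φ ψ t x z) * Sg φ ψ t y n z := by simp_rw [integral_mul_const]
    _ = ∫ z, ((∫ x, φ x) * Scseq φ ψ t 0 z) * Sg φ ψ t y n z := by
        simp_rw [fun z => intA hφ hψ hc hdψ hφ1 t z (C := C)]
    _ = (∫ x, φ x) * ∫ z, Scseq φ ψ t 0 z * Sg φ ψ t y n z := by
        simp_rw [mul_assoc]
        rw [integral_const_mul]
    _ = (∫ x, φ x) * ∫ z, Scseq φ ψ t n z * Sg φ ψ t y 0 z := by
        rw [pairing_chain hφ hψ hc hdψ hφ1 t y n 0]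
        norm_num
    _ = (∫ x, φ x) * ∫ z, Scseq φ ψ t n z * φ (z + y) := rfl
    _ = (∫ x : ℝ, φ x) * ∫ u in Ioi (0:ℝ), kerPow (KtKer φ ψ t) n (y + t) (u + t) := by
        rw [cseq_phi hφ hψ hc hdφ hdψ hφ1 t n y]
end
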